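/- arXiv:2502.01950 — 4 statements merged into one kernel-verified Lean document; each statement's English description precedes it below -/
import Mathlib

section
/- Let H be a maximal subgroup of a finite group G, θ an irreducible character of H, and χ an irreducible constituent of the induced character θ^G. Then cod(χ) ≥ cod(θ). -/
open CategoryTheory

/-- The kernel of (the character of) a finite-dimensional complex representation. -/
noncomputable def charKer {G : Type} [Group G] (V : FDRep ℂ G) : Subgroup G :=
  MonoidHom.ker (Representation.asGroupHom V.ρ)

/-- The codegree of a character: `|G : ker χ| / χ(1)`. -/
noncomputable def codeg {G : Type} [Group G] (V : FDRep ℂ G) : ℕ :=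
  (charKer V).index / Module.finrank ℂ V

/-- The set of codegrees of irreducible characters of `G`. -/
def codSet (G : Type) [Group G] : Set ℕ :=
  {n | ∃ V : FDRep ℂ G, Simple V ∧ codeg V = n}

/-- Inner product of class functions on a finite group. -/
noncomputable def innerChar (G : Type) [Group G] (f g : G → ℂ) : ℂ :=
  (∑ᶠ x : G, f x * starRingEnd ℂ (g x)) / Nat.card G

open scoped Classical in
/-- The induced character `θ^G` of a character `θ` of a subgroup `H ≤ G`. -/
noncomputable def indChar {G : Type} [Group G] (H : Subgroup G) (θ : FDRep ℂ ↥H) : G → ℂ :=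
  fun g => (∑ᶠ x : G, if h : x * g * x⁻¹ ∈ H then θ.character ⟨x * g * x⁻¹, h⟩ else 0) /
    Nat.card ↥H

section Aux

open Module Polynomial

lemma aux_char_conj_eq {G : Type} [Group G] [Finite G] (V : FDRep ℂ G) (g : G) :
    (starRingEnd ℂ) (V.character g) = V.character g⁻¹ := by
  classical
  set f : Module.End ℂ V := V.ρ g with hf
  set f' : Module.End ℂ V := V.ρ g⁻¹ with hf'
  have hn : 0 < orderOf g := orderOf_pos g
  set n := orderOf g with hndef
  have hfn : f ^ n = 1 := by
    rw [hf, ← map_pow, pow_orderOf_eq_one, map_one]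
  have hff' : f' * f = 1 := by rw [hf, hf', ← map_mul, inv_mul_cancel, map_one]
  have hsq : Squarefree (X ^ n - 1 : ℂ[X]) :=
    (Polynomial.X_pow_sub_one_separable_iff.mpr (by exact_mod_cast hn.ne')).squarefree
  have hss : f.IsSemisimple :=
    Module.End.isSemisimple_of_squarefree_aeval_eq_zero hsq
      (by simp [map_pow, hfn, sub_eq_zero])
  have htop : ⨆ μ, f.eigenspace μ = ⊤ := by
    have h1 := Module.End.iSup_maxGenEigenspace_eq_top f
    have h2 := hss.isFinitelySemisimple.maxGenEigenspace_eq_eigenspace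
    simp_rw [h2] at h1
    exact h1
  have hint : DirectSum.IsInternal f.eigenspace :=
    (DirectSum.isInternal_submodule_iff_iSupIndep_and_iSup_eq_top _).mpr
      ⟨f.eigenspaces_iSupIndep, htop⟩
  have hroot : ∀ μ : ℂ, f.eigenspace μ ≠ ⊥ → μ ^ n = 1 := by
    intro μ hμ
    obtain ⟨x, hx, hx0⟩ := (Submodule.ne_bot_iff _).mp hμ
    have hx' : f x = μ • x := (Module.End.mem_eigenspace_iff).mp hx
    have : (f ^ n) x = μ ^ n • x := by
      clear hfn hff'
      induction n with
      | zero => simp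
      | succ m ih =>
        rw [pow_succ, pow_succ, Module.End.mul_apply, hx', map_smul, ih, smul_smul, mul_comm]
    rw [hfn] at this
    have : (μ ^ n - 1) • x = 0 := by
      rw [sub_smul, one_smul, ← this]; simp
    rcases smul_eq_zero.mp this with h | h
    · exact sub_eq_zero.mp h
    · exact absurd h hx0
  have hfin : {μ : ℂ | f.eigenspace μ ≠ ⊥}.Finite := by
    apply Set.Finite.subset (Polynomial.finite_setOf_isRoot (p := (X ^ n - 1 : ℂ[X])) ?_)
    · intro μ hμ
      simp only [Set.mem_setOf_eq, IsRoot.def, eval_sub, eval_pow, eval_X, eval_one,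
        sub_eq_zero]
      exact hroot μ hμ
    · simpa using Polynomial.X_pow_sub_C_ne_zero hn (1 : ℂ)
  have hmem : ∀ (μ : ℂ) (x : V.V), x ∈ f.eigenspace μ → f x = μ • x := fun μ x hx =>
    Module.End.mem_eigenspace_iff.mp hx
  have hmapsto : ∀ μ : ℂ, Set.MapsTo f (f.eigenspace μ) (f.eigenspace μ) := by
    intro μ x hx
    have := hmem μ x hx
    simp only [SetLike.mem_coe, Module.End.mem_eigenspace_iff] at *
    rw [this, map_smul, this]
  have hf'x : ∀ (μ : ℂ), f.eigenspace μ ≠ ⊥ → ∀ x ∈ f.eigenspace μ, f' x = μ⁻¹ • x := by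
    intro μ hμ x hx
    have hμ0 : μ ≠ 0 := by
      intro h
      have := hroot μ hμ
      rw [h, zero_pow hn.ne'] at this
      exact zero_ne_one this
    have h1 : x = f' (f x) := by
      have := congrArg (fun (T : Module.End ℂ V.V) => T x) hff'
      simpa using this.symm
    rw [hmem μ x hx, map_smul] at h1
    have h2 := congrArg (fun y => μ⁻¹ • y) h1
    simpa [smul_smul, inv_mul_cancel₀ hμ0] using h2.symm
  have hmapsto' : ∀ μ : ℂ, Set.MapsTo f' (f.eigenspace μ) (f.eigenspace μ) := by
    intro μ x hx
    by_cases hμ : f.eigenspace μ = ⊥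
    · simp only [SetLike.mem_coe, hμ, Submodule.mem_bot] at hx
      simp [SetLike.mem_coe, hx, hμ]
    · have := hf'x μ hμ x hx
      simp only [SetLike.mem_coe, Module.End.mem_eigenspace_iff] at *
      rw [this, map_smul, hmem μ x hx, smul_smul, smul_smul, mul_comm]
  have tr1 := LinearMap.trace_eq_sum_trace_restrict' hint hfin (f := f) hmapsto
  have tr2 := LinearMap.trace_eq_sum_trace_restrict' hint hfin (f := f') hmapsto'
  have htr1 : ∀ μ ∈ hfin.toFinset,
      LinearMap.trace ℂ _ (f.restrict (hmapsto μ)) = μ * (finrank ℂ (f.eigenspace μ)) := by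
    intro μ _
    have : f.restrict (hmapsto μ) = μ • LinearMap.id := by
      ext ⟨x, hx⟩
      simp [LinearMap.restrict_apply, hmem μ x hx]
      exact hmem μ x hx
    rw [this, map_smul, LinearMap.trace_id]
    simp
  have htr2 : ∀ μ ∈ hfin.toFinset,
      LinearMap.trace ℂ _ (f'.restrict (hmapsto' μ)) = μ⁻¹ * (finrank ℂ (f.eigenspace μ)) := by
    intro μ hμ
    rw [Set.Finite.mem_toFinset] at hμ
    have : f'.restrict (hmapsto' μ) = μ⁻¹ • LinearMap.id := by
      ext ⟨x, hx⟩
      simp [LinearMap.restrict_apply, hf'x μ hμ x hx]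
      exact hf'x μ hμ x hx
    rw [this, map_smul, LinearMap.trace_id]
    simp
  have hchar1 : V.character g = LinearMap.trace ℂ V.V f := rfl
  have hchar2 : V.character g⁻¹ = LinearMap.trace ℂ V.V f' := rfl
  rw [hchar1, hchar2, tr1, tr2, map_sum, Finset.sum_congr rfl htr2]
  apply Finset.sum_congr rfl
  intro μ hμ
  rw [Set.Finite.mem_toFinset] at hμ
  rw [htr1 μ (Set.Finite.mem_toFinset _ |>.mpr hμ)]
  rw [map_mul]
  congr 1
  · have habs : ‖μ‖ = 1 :=
      Complex.norm_eq_one_of_pow_eq_one (hroot μ hμ) hn.ne'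
    exact (Complex.inv_eq_conj habs).symm
  · simp

lemma aux_sum_char_mul_char_inv {K : Type} [Group K] [Fintype K] (V W : FDRep ℂ K) :
    ∑ g : K, V.character g * W.character g⁻¹ = (Fintype.card K : ℂ) * finrank ℂ (W ⟶ V) := by
  classical
  have hc : (Fintype.card K : ℂ) ≠ 0 := Nat.cast_ne_zero.mpr Fintype.card_ne_zero
  have : Invertible ((Fintype.card K : ℂ)) := invertibleOfNonzero hc
  have h1 : ∀ g : K, V.character g * W.character g⁻¹ =
      (FDRep.of (Representation.linHom W.ρ V.ρ)).character g := by
    intro g; rw [FDRep.char_linHom]; ring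
  rw [Finset.sum_congr rfl fun g _ => h1 g]
  have h2 : (⅟(Fintype.card K : ℂ)) • ∑ g : K,
      (FDRep.of (Representation.linHom W.ρ V.ρ)).character g = (finrank ℂ (W ⟶ V) : ℂ) := by
    rw [invOf_eq_inv, smul_eq_mul, Fintype.card_eq_nat_card]
    rw [FDRep.average_char_eq_finrank_invariants]
    norm_cast
    rw [show (FDRep.of (Representation.linHom W.ρ V.ρ)).ρ = Representation.linHom W.ρ V.ρ from
      FDRep.of_ρ' _]
    erw [(Representation.linHom.invariantsEquivFDRepHom W V).finrank_eq]
  have := congrArg (fun z => (Fintype.card K : ℂ) * z) h2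
  simpa [smul_smul, mul_invOf_self] using this

noncomputable def auxSubRep {K : Type} [Group K] (V : FDRep ℂ K) (p : Submodule ℂ V)
    (hp : ∀ g : K, ∀ x ∈ p, V.ρ g x ∈ p) : Representation ℂ K p where
  toFun g := (V.ρ g).restrict (hp g)
  map_one' := by ext x; simp [LinearMap.restrict_apply]
  map_mul' g h := by ext x; simp [LinearMap.restrict_apply]

lemma aux_eq_bot_or_eq_top_of_simple {K : Type} [Group K] (V : FDRep ℂ K) (hV : Simple V)
    (p : Submodule ℂ V) (hp : ∀ g : K, ∀ x ∈ p, V.ρ g x ∈ p) : p = ⊥ ∨ p = ⊤ := by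
  by_cases hbot : p = ⊥
  · left; exact hbot
  right
  obtain ⟨x, hx, hx0⟩ := (Submodule.ne_bot_iff _).mp hbot
  let Vp : FDRep ℂ K := FDRep.of (auxSubRep V p hp)
  let ι : Vp ⟶ V := { hom := FGModuleCat.ofHom p.subtype, comm := fun g => by ext ⟨y, hy⟩; rfl }
  have hinj : Function.Injective (ι.hom : Vp → V) := by exact Subtype.val_injective
  have hmono : Mono ι := by
    apply ConcreteCategory.mono_of_injective
    exact hinj
  have hne : ι ≠ 0 := by
    intro h
    have : ι.hom ⟨x, hx⟩ = 0 := by rw [h]; rfl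
    exact hx0 this
  have hiso : IsIso ι := (Simple.mono_isIso_iff_nonzero ι).mpr hne
  have hsurj : Function.Surjective (ι.hom : Vp → V) := by
    intro y
    obtain ⟨z, hz⟩ := (FDRep.isoToLinearEquiv (asIso ι)).surjective y
    exact ⟨z, hz⟩
  rw [eq_top_iff]
  intro y _
  obtain ⟨⟨z, hz⟩, rfl⟩ := hsurj y
  exact hz

open scoped Classical in
lemma aux_sum_dite_subgroup {G : Type} [Group G] [Fintype G] (H : Subgroup G) [Fintype ↥H]
    (f : ↥H → ℂ) :
    ∑ z : G, (if h : z ∈ H then f ⟨z, h⟩ else 0) = ∑ h : ↥H, f h := by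
  rw [← Finset.sum_subset (Finset.subset_univ (Finset.univ.filter (· ∈ H)))
    (fun x _ hx => by
      rw [Finset.mem_filter] at hx
      push_neg at hx
      rw [dif_neg (hx (Finset.mem_univ x))])]
  rw [Finset.sum_subtype (p := (· ∈ H)) (Finset.univ.filter (· ∈ H))
    (fun x => by simp) (fun z => if h : z ∈ H then f ⟨z, h⟩ else 0)]
  apply Finset.sum_congr rfl
  intro x _
  rw [dif_pos x.2]

lemma aux_frobenius_reciprocity {G : Type} [Group G] [Finite G] (H : Subgroup G)
    (θ : FDRep ℂ ↥H) (χ : FDRep ℂ G) :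
    innerChar G (indChar H θ) χ.character =
      innerChar ↥H θ.character (fun h => χ.character ↑h) := by
  classical
  letI : Fintype G := Fintype.ofFinite G
  letI : Fintype ↥H := Fintype.ofFinite ↥H
  have hcG : (Nat.card G : ℂ) ≠ 0 := Nat.cast_ne_zero.mpr Nat.card_pos.ne'
  have hcH : (Nat.card ↥H : ℂ) ≠ 0 := Nat.cast_ne_zero.mpr Nat.card_pos.ne'
  unfold innerChar indChar
  rw [finsum_eq_sum_of_fintype, finsum_eq_sum_of_fintype]
  simp_rw [finsum_eq_sum_of_fintype]
  set S : ℂ := ∑ h : ↥H, θ.character h * starRingEnd ℂ (χ.character ↑h) with hS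
  have key : ∀ y : G, ∑ x : G,
      (if h : y * x * y⁻¹ ∈ H then θ.character ⟨y * x * y⁻¹, h⟩ else 0) *
        starRingEnd ℂ (χ.character x) = S := by
    intro y
    rw [← Equiv.sum_comp ((Equiv.mulLeft y⁻¹).trans (Equiv.mulRight y))]
    have step : ∀ z : G,
        (if h : y * ((Equiv.mulLeft y⁻¹).trans (Equiv.mulRight y) z) * y⁻¹ ∈ H then
            θ.character ⟨y * ((Equiv.mulLeft y⁻¹).trans (Equiv.mulRight y) z) * y⁻¹, h⟩ else 0) *
          starRingEnd ℂ (χ.character ((Equiv.mulLeft y⁻¹).trans (Equiv.mulRight y) z)) =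
        (if h : z ∈ H then θ.character ⟨z, h⟩ * starRingEnd ℂ (χ.character ↑(⟨z, h⟩ : ↥H))
          else 0) := by
      intro z
      have he : ((Equiv.mulLeft y⁻¹).trans (Equiv.mulRight y)) z = y⁻¹ * z * y := by
        simp [Equiv.mulLeft, Equiv.mulRight, mul_assoc]
      rw [he]
      have h1 : y * (y⁻¹ * z * y) * y⁻¹ = z := by group
      have h2 : χ.character (y⁻¹ * z * y) = χ.character z := by
        have := FDRep.char_conj χ z y⁻¹
        simpa using this
      simp_rw [h1, h2]
      rw [dite_mul]
      simp
    rw [Finset.sum_congr rfl (fun z _ => step z)]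
    exact aux_sum_dite_subgroup H fun h => θ.character h * starRingEnd ℂ (χ.character ↑h)
  calc (∑ x : G, ((∑ y : G, if h : y * x * y⁻¹ ∈ H then θ.character ⟨y * x * y⁻¹, h⟩ else 0) /
          (Nat.card ↥H : ℂ)) * starRingEnd ℂ (χ.character x)) / (Nat.card G : ℂ)
      = (∑ y : G, ∑ x : G,
          (if h : y * x * y⁻¹ ∈ H then θ.character ⟨y * x * y⁻¹, h⟩ else 0) *
            starRingEnd ℂ (χ.character x)) / (Nat.card ↥H : ℂ) / (Nat.card G : ℂ) := by
        congr 1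
        rw [Finset.sum_congr rfl (fun x (_ : x ∈ Finset.univ) => by
          rw [div_mul_eq_mul_div, Finset.sum_mul]), ← Finset.sum_div]
        congr 1
        exact Finset.sum_comm
    _ = ((Nat.card G : ℂ) * S) / (Nat.card ↥H : ℂ) / (Nat.card G : ℂ) := by
        rw [Finset.sum_congr rfl (fun y _ => key y), Finset.sum_const, Finset.card_univ]
        simp [Nat.card_eq_fintype_card, nsmul_eq_mul]
    _ = S / (Nat.card ↥H : ℂ) := by
        field_simp

lemma aux_mem_charKer_iff {G : Type} [Group G] (V : FDRep ℂ G) (g : G) :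
    g ∈ charKer V ↔ V.ρ g = 1 := by
  rw [charKer, MonoidHom.mem_ker]
  constructor
  · intro h
    have := congrArg Units.val h
    rwa [Representation.asGroupHom_apply] at this
  · intro h
    apply Units.ext
    rw [Representation.asGroupHom_apply, h]
    rfl

lemma aux_finrank_pos {K : Type} [Group K] (V : FDRep ℂ K) (hV : Simple V) :
    0 < finrank ℂ V := by
  by_contra h
  push_neg at h
  have h0 : finrank ℂ V = 0 := Nat.le_zero.mp h
  have hsub : Subsingleton V := (finrank_zero_iff (R := ℂ)).mp h0
  have : (𝟙 V : V ⟶ V) = 0 := by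
    ext v
    exact (hsub.elim _ _ : _ = _)
  exact (CategoryTheory.id_nonzero V) this

lemma aux_finrank_iSup_le {M : Type} [AddCommGroup M] [Module ℂ M] [FiniteDimensional ℂ M]
    {ι : Type} [Fintype ι] (p : ι → Submodule ℂ M) :
    finrank ℂ (⨆ i, p i : Submodule ℂ M) ≤ ∑ i, finrank ℂ (p i) := by
  classical
  rw [← Finset.sup_univ_eq_iSup]
  induction (Finset.univ : Finset ι) using Finset.induction with
  | empty => simp
  | @insert a s ha ih =>
    rw [Finset.sup_insert, Finset.sum_insert ha]
    calc finrank ℂ ((p a) ⊔ s.sup p : Submodule ℂ M)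
        ≤ finrank ℂ (p a) + finrank ℂ (s.sup p : Submodule ℂ M) := by
          have := Submodule.finrank_sup_add_finrank_inf_eq (p a) (s.sup p)
          omega
      _ ≤ finrank ℂ (p a) + ∑ i ∈ s, finrank ℂ (p i) :=
          Nat.add_le_add_left (by simpa using ih) _

end Aux

theorem stmt_3 {G : Type} [Group G] [Finite G] (H : Subgroup G) (hmax : IsCoatom H)
    (θ : FDRep ℂ ↥H) (hθ : Simple θ) (χ : FDRep ℂ G) (hχ : Simple χ)
    (hcons : innerChar G (indChar H θ) χ.character ≠ 0) :
    codeg θ ≤ codeg χ := by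
  classical
  letI : Fintype G := Fintype.ofFinite G
  letI : Fintype ↥H := Fintype.ofFinite ↥H
  set Res : FDRep ℂ ↥H := FDRep.of (χ.ρ.comp H.subtype) with hRes
  have hResChar : ∀ h : ↥H, Res.character h = χ.character ↑h := fun h => rfl
  have hResρ : ∀ h : ↥H, Res.ρ h = χ.ρ ↑h := fun h => rfl
  -- Step 1: the inner product ⟨θ, Res χ⟩ is nonzero
  rw [aux_frobenius_reciprocity H θ χ] at hcons
  have hS : (∑ h : ↥H, θ.character h * starRingEnd ℂ (χ.character ↑h)) ≠ 0 := by
    intro h0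
    apply hcons
    unfold innerChar
    rw [finsum_eq_sum_of_fintype]
    simp only []
    rw [h0, zero_div]
  have hT : (∑ h : ↥H, Res.character h * θ.character h⁻¹) ≠ 0 := by
    intro h0
    apply hS
    calc ∑ h : ↥H, θ.character h * starRingEnd ℂ (χ.character ↑h)
        = ∑ h : ↥H, θ.character h * Res.character h⁻¹ := by
          apply Finset.sum_congr rfl
          intro h _
          congr 1
          rw [aux_char_conj_eq χ ↑h]
          rfl
      _ = ∑ h : ↥H, Res.character h * θ.character h⁻¹ := by
          rw [← Equiv.sum_comp (Equiv.inv ↥H)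
            (fun h => Res.character h * θ.character h⁻¹)]
          apply Finset.sum_congr rfl
          intro h _
          simp only [Equiv.inv_apply, inv_inv]
          ring
      _ = 0 := h0
  -- Step 2: a nonzero hom f : θ ⟶ Res
  rw [aux_sum_char_mul_char_inv Res θ] at hT
  have hhom : Module.finrank ℂ (θ ⟶ Res) ≠ 0 := by
    intro h0
    rw [h0] at hT
    simp at hT
  have : Nontrivial (θ ⟶ Res) := by
    rcases Module.finrank_pos_iff.mp (Nat.pos_of_ne_zero hhom) with h
    exact h
  obtain ⟨f, hf⟩ := exists_ne (0 : θ ⟶ Res)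
  have hcommf : ∀ (h : ↥H) (v : θ), f.hom (θ.ρ h v) = χ.ρ ↑h (f.hom v) := by
    intro h v
    have hc := f.comm h
    exact (LinearMap.congr_fun
      (congrArg (fun (l : θ.V ⟶ Res.V) => l.hom.hom) hc) v : _)
  have hfne : ∃ v : θ, f.hom v ≠ 0 := by
    by_contra h0
    push_neg at h0
    apply hf
    apply Action.Hom.ext
    apply ConcreteCategory.hom_ext
    intro v
    exact h0 v
  -- Step 3: f.hom is injective
  have hinj : Function.Injective f.hom := by
    have hker : ∀ h : ↥H, ∀ x ∈ LinearMap.ker f.hom.hom.hom, θ.ρ h x ∈ LinearMap.ker f.hom.hom.hom := by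
      intro h x hx
      rw [LinearMap.mem_ker] at hx ⊢
      exact (hcommf h x).trans (by rw [show (ConcreteCategory.hom f.hom) x = 0 from hx, map_zero])
    rcases aux_eq_bot_or_eq_top_of_simple θ hθ (LinearMap.ker f.hom.hom.hom) hker with hb | ht
    · exact LinearMap.ker_eq_bot.mp hb
    · exfalso
      obtain ⟨v, hv⟩ := hfne
      apply hv
      have : v ∈ LinearMap.ker f.hom.hom.hom := by rw [ht]; trivial
      exact this
  -- Step 4: H ∩ ker χ ≤ ker θ
  have hkerle : ∀ h : ↥H, (↑h : G) ∈ charKer χ → h ∈ charKer θ := by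
    intro h hh
    rw [aux_mem_charKer_iff] at hh ⊢
    apply LinearMap.ext
    intro v
    apply hinj
    exact (hcommf h v).trans (by rw [hh]; rfl)
  set K : Subgroup G := charKer χ with hKdef
  by_cases hKH : K ≤ H
  · -- Case 1 : ker χ ≤ H
    have ha : K ≤ (charKer θ).map H.subtype := by
      intro g hg
      exact ⟨⟨g, hKH hg⟩, hkerle ⟨g, hKH hg⟩ hg, rfl⟩
    set d := Module.finrank ℂ θ with hd
    have hdpos : 0 < d := aux_finrank_pos θ hθ
    have hepos : 0 < Module.finrank ℂ χ := aux_finrank_pos χ hχ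
    set W : Submodule ℂ χ := LinearMap.range f.hom.hom.hom with hW
    have hWrank : Module.finrank ℂ W = d := LinearMap.finrank_range_of_inj hinj
    have hWH : ∀ h : ↥H, Submodule.map (χ.ρ (↑h : G)) W = W := by
      intro h
      apply le_antisymm
      · intro x hx
        rw [Submodule.mem_map] at hx
        obtain ⟨y, hy, rfl⟩ := hx
        rw [hW, LinearMap.mem_range] at hy
        obtain ⟨v, rfl⟩ := hy
        exact ⟨θ.ρ h v, hcommf h v⟩
      · intro x hx
        rw [hW, LinearMap.mem_range] at hx
        obtain ⟨v, rfl⟩ := hx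
        rw [Submodule.mem_map]
        refine ⟨f.hom (θ.ρ h⁻¹ v), ⟨θ.ρ h⁻¹ v, rfl⟩, ?_⟩
        rw [← hcommf h (θ.ρ h⁻¹ v), ← Module.End.mul_apply, ← map_mul, mul_inv_cancel,
          map_one]
        rfl
    set U : Submodule ℂ χ := ⨆ q : G ⧸ H, Submodule.map (χ.ρ (Quotient.out q)) W with hU
    have claim1 : ∀ g : G, Submodule.map (χ.ρ g) W ≤ U := by
      intro g
      obtain ⟨h, hout⟩ := QuotientGroup.mk_out_eq_mul H g
      have heq : Submodule.map (χ.ρ (Quotient.out ((QuotientGroup.mk g : G ⧸ H)))) W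
          = Submodule.map (χ.ρ g) W := by
        rw [hout, map_mul, show χ.ρ g * χ.ρ ↑h = (χ.ρ g).comp (χ.ρ (↑h : G)) from rfl,
          Submodule.map_comp, hWH h]
      rw [← heq]
      exact le_iSup (fun q : G ⧸ H => Submodule.map (χ.ρ (Quotient.out q)) W)
        (QuotientGroup.mk g)
    have hUinv : ∀ g : G, ∀ x ∈ U, χ.ρ g x ∈ U := by
      intro g x hx
      have hle : Submodule.map (χ.ρ g) U ≤ U := by
        rw [hU, Submodule.map_iSup]
        apply iSup_le
        intro q
        have hcomp : (χ.ρ g).comp (χ.ρ (Quotient.out q)) = χ.ρ (g * Quotient.out q) := by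
          rw [map_mul]; rfl
        rw [← Submodule.map_comp, hcomp]
        exact claim1 _
      exact hle ⟨x, hx, rfl⟩
    have hWU : W ≤ U := by
      have h1 := claim1 1
      rw [map_one, Module.End.one_eq_id, Submodule.map_id] at h1
      exact h1
    have hUtop : U = ⊤ := by
      rcases aux_eq_bot_or_eq_top_of_simple χ hχ U hUinv with hb | ht
      · exfalso
        obtain ⟨v, hv⟩ := hfne
        apply hv
        have hmem : f.hom v ∈ U := hWU ⟨v, rfl⟩
        rw [hb] at hmem
        simpa using hmem
      · exact ht
    have hcard : Module.finrank ℂ χ ≤ H.index * d := by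
      have h1 : Module.finrank ℂ χ = Module.finrank ℂ U := by
        rw [hUtop]
        exact (finrank_top ℂ _).symm
      have h2 := aux_finrank_iSup_le (fun q : G ⧸ H => Submodule.map (χ.ρ (Quotient.out q)) W)
      have h3 : ∀ q : G ⧸ H, Module.finrank ℂ (Submodule.map (χ.ρ (Quotient.out q)) W) ≤ d :=
        fun q => le_trans (Submodule.finrank_map_le _ _) (le_of_eq hWrank)
      calc Module.finrank ℂ χ = Module.finrank ℂ U := h1
        _ ≤ ∑ q : G ⧸ H, Module.finrank ℂ (Submodule.map (χ.ρ (Quotient.out q)) W) := h2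
        _ ≤ ∑ _q : G ⧸ H, d := Finset.sum_le_sum (fun q _ => h3 q)
        _ = Fintype.card (G ⧸ H) * d := by rw [Finset.sum_const, Finset.card_univ, smul_eq_mul]
        _ = H.index * d := by rw [← Nat.card_eq_fintype_card]; rfl
    -- index comparison
    set N : Subgroup ↥H := charKer θ with hNdef
    have hNle : (N.map H.subtype) ≤ H := Subgroup.map_subtype_le N
    have hNidx : (N.map H.subtype).index = N.index * H.index := by
      rw [← Subgroup.relIndex_mul_index hNle]
      congr 1
      have : (N.map H.subtype).subgroupOf H = N :=
        Subgroup.comap_map_eq_self_of_injective (Subgroup.subtype_injective H) N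
      rw [Subgroup.relIndex, this]
    obtain ⟨m, hm⟩ := Subgroup.index_dvd_of_le ha
    have hm1 : 1 ≤ m := by
      rcases Nat.eq_zero_or_pos m with h | h
      · exfalso
        apply Subgroup.index_ne_zero_of_finite (H := K)
        rw [hm, h, mul_zero]
      · exact h
    have hidxle : H.index * N.index ≤ K.index := by
      calc H.index * N.index = N.index * H.index := Nat.mul_comm _ _
        _ ≤ N.index * H.index * m := Nat.le_mul_of_pos_right _ hm1
        _ = (N.map H.subtype).index * m := by rw [hNidx]
        _ = K.index := hm.symm
    calc codeg θ = N.index / d := rfl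
      _ = (H.index * N.index) / (H.index * d) := by
          rw [Nat.mul_div_mul_left _ _ (Nat.pos_of_ne_zero
            (Subgroup.index_ne_zero_of_finite (H := H)))]
      _ ≤ (H.index * N.index) / Module.finrank ℂ χ := Nat.div_le_div_left hcard hepos
      _ ≤ K.index / Module.finrank ℂ χ := Nat.div_le_div_right hidxle
      _ = codeg χ := rfl
  · -- Case 2 : ker χ ⊄ H
    have hsup : H ⊔ K = ⊤ := hmax.2 _ (left_lt_sup.mpr hKH)
    haveI : K.Normal := MonoidHom.normal_ker _
    have hdecomp : ∀ g : G, ∃ h ∈ H, ∃ k ∈ K, h * k = g := by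
      intro g
      have hg : g ∈ (↑(H ⊔ K) : Set G) := by rw [hsup]; trivial
      rw [Subgroup.mul_normal H K] at hg
      exact hg
    have hsurj : Function.Surjective f.hom := by
      have hrinv : ∀ g : G, ∀ x ∈ LinearMap.range f.hom.hom.hom, χ.ρ g x ∈ LinearMap.range f.hom.hom.hom := by
        intro g x hx
        obtain ⟨h, hh, k, hk, rfl⟩ := hdecomp g
        have hk1 : χ.ρ k = 1 := (aux_mem_charKer_iff χ k).mp hk
        have hcalc : χ.ρ (h * k) x = χ.ρ h x := by
          rw [map_mul, Module.End.mul_apply, hk1]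
          rfl
        rw [hcalc]
        rw [LinearMap.mem_range] at hx
        obtain ⟨v, rfl⟩ := hx
        exact ⟨θ.ρ ⟨h, hh⟩ v, hcommf ⟨h, hh⟩ v⟩
      rcases aux_eq_bot_or_eq_top_of_simple χ hχ (LinearMap.range f.hom.hom.hom) hrinv with hb | ht
      · exfalso
        obtain ⟨v, hv⟩ := hfne
        apply hv
        have hmem : f.hom v ∈ LinearMap.range f.hom.hom.hom := ⟨v, rfl⟩
        rw [hb] at hmem
        simpa using hmem
      · exact LinearMap.range_eq_top.mp ht
    have hbij : Function.Bijective f.hom := ⟨hinj, hsurj⟩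
    have hdim : Module.finrank ℂ θ = Module.finrank ℂ χ :=
      (LinearEquiv.ofBijective f.hom.hom.hom hbij).finrank_eq
    have hker : charKer θ = K.subgroupOf H := by
      ext h
      rw [Subgroup.mem_subgroupOf, aux_mem_charKer_iff, hKdef, aux_mem_charKer_iff]
      constructor
      · intro h1
        apply LinearMap.ext
        intro w
        obtain ⟨v, rfl⟩ := hsurj w
        have h2 := hcommf h v
        rw [h1] at h2
        exact h2.symm
      · intro h1
        apply LinearMap.ext
        intro v
        apply hinj
        exact (hcommf h v).trans (by rw [h1]; rfl)
    have hidx : (charKer θ).index = K.index := by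
      rw [hker]
      have e := QuotientGroup.quotientInfEquivProdNormalQuotient H K
      have h1 : (K.subgroupOf H).index = (K.subgroupOf (H ⊔ K)).index :=
        Nat.card_congr e.toEquiv
      have h2 : (K.subgroupOf (H ⊔ K)).index = K.relIndex (H ⊔ K) := rfl
      rw [h1, h2, hsup, Subgroup.relIndex_top_right]
    unfold codeg
    rw [hidx, hdim]
end

section
/- Let H be any subgroup of a finite group G, θ an irreducible character of H, and χ an irreducible constituent of the induced character θ^G. Then cod(χ) ≥ cod(θ). -/
open CategoryTheory

namespace StmtAux

open Module LinearMap

theorem conj_trace_eq {V : Type} [AddCommGroup V] [Module ℂ V] [FiniteDimensional ℂ V]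
    (A B : Module.End ℂ V) (m : ℕ) (hm : m ≠ 0) (hAm : A ^ m = 1)
    (hAB : A * B = 1) (hBA : B * A = 1) :
    starRingEnd ℂ (trace ℂ V A) = trace ℂ V B := by
  have hss : A.IsSemisimple := by
    apply Module.End.isSemisimple_of_squarefree_aeval_eq_zero
      (p := Polynomial.X ^ m - Polynomial.C 1)
    · exact (Polynomial.separable_X_pow_sub_C (1:ℂ)
        (by exact_mod_cast (Nat.cast_ne_zero (R := ℂ)).mpr hm) one_ne_zero).squarefree
    · simp [map_sub, hAm]
  have htop : ⨆ μ, A.eigenspace μ = ⊤ := by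
    have h1 := Module.End.iSup_maxGenEigenspace_eq_top A
    simp_rw [hss.isFinitelySemisimple.maxGenEigenspace_eq_eigenspace] at h1
    exact h1
  have hind : iSupIndep A.eigenspace := A.eigenspaces_iSupIndep
  have hInternal : DirectSum.IsInternal A.eigenspace := by
    rw [DirectSum.isInternal_submodule_iff_iSupIndep_and_iSup_eq_top]
    exact ⟨hind, htop⟩
  have hfin : {μ | A.eigenspace μ ≠ ⊥}.Finite :=
    WellFoundedGT.finite_ne_bot_of_iSupIndep hind
  have hBapply : ∀ μ : ℂ, ∀ x ∈ A.eigenspace μ, B x = μ⁻¹ • x := by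
    intro μ x hx
    rw [Module.End.mem_eigenspace_iff] at hx
    have hxBA : x = B (A x) := by
      have := LinearMap.congr_fun hBA x; simpa [Module.End.mul_apply] using this.symm
    have h2 : x = μ • B x := by conv_lhs => rw [hxBA, hx, map_smul]
    rcases eq_or_ne μ 0 with rfl | hμ
    · have hx0 : x = 0 := by rw [h2, zero_smul]
      simp [hx0]
    · apply smul_right_injective V hμ
      show μ • B x = μ • (μ⁻¹ • x)
      rw [smul_smul, mul_inv_cancel₀ hμ, one_smul, ← h2]
  have hAmaps : ∀ μ : ℂ, Set.MapsTo A (A.eigenspace μ) (A.eigenspace μ) := by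
    intro μ x hx
    rw [SetLike.mem_coe, Module.End.mem_eigenspace_iff] at hx ⊢
    rw [hx, map_smul, hx]
  have hBmaps : ∀ μ : ℂ, Set.MapsTo B (A.eigenspace μ) (A.eigenspace μ) := by
    intro μ x hx
    have heq := hBapply μ x hx
    rw [SetLike.mem_coe, Module.End.mem_eigenspace_iff] at hx ⊢
    rw [heq, map_smul, hx, smul_comm]
  -- eigenvalues satisfy conj μ = μ⁻¹
  have hconj : ∀ μ : ℂ, A.eigenspace μ ≠ ⊥ → starRingEnd ℂ μ = μ⁻¹ := by
    intro μ hne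
    obtain ⟨x, hx, hx0⟩ := Submodule.exists_mem_ne_zero_of_ne_bot hne
    have hev : A.HasEigenvector μ x := ⟨hx, hx0⟩
    have hpow := hev.pow_apply m
    rw [hAm] at hpow
    have hμm : μ ^ m = 1 := by
      by_contra h
      have : (μ ^ m - 1) • x = 0 := by
        rw [sub_smul, one_smul, ← hpow]; simp [Module.End.one_apply]
      rcases smul_eq_zero.mp this with h1 | h1
      · exact h (by linear_combination h1)
      · exact hx0 h1
    have hnsq : Complex.normSq μ = 1 := by
      have h1 : Complex.normSq μ ^ m = 1 := by
        rw [← map_pow, hμm]; simp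
      have h0 : 0 ≤ Complex.normSq μ := Complex.normSq_nonneg μ
      by_contra h
      rcases lt_or_gt_of_ne h with hlt | hgt
      · exact absurd h1 (by nlinarith [pow_lt_one₀ h0 hlt hm])
      · exact absurd h1 (by nlinarith [one_lt_pow₀ hgt hm])
    refine eq_inv_of_mul_eq_one_left ?_
    rw [mul_comm, Complex.mul_conj, hnsq]; norm_num
  have hA' := LinearMap.trace_eq_sum_trace_restrict' hInternal hfin hAmaps
  have hB' := LinearMap.trace_eq_sum_trace_restrict' hInternal hfin hBmaps
  have hRA : ∀ μ : ℂ, trace ℂ (A.eigenspace μ) (A.restrict (hAmaps μ)) =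
      μ * (finrank ℂ (A.eigenspace μ) : ℂ) := by
    intro μ
    have : A.restrict (hAmaps μ) = μ • (1 : Module.End ℂ (A.eigenspace μ)) := by
      ext ⟨x, hx⟩
      exact Module.End.mem_eigenspace_iff.mp hx
    rw [this, map_smul, smul_eq_mul, LinearMap.trace_one]
  have hRB : ∀ μ : ℂ, trace ℂ (A.eigenspace μ) (B.restrict (hBmaps μ)) =
      μ⁻¹ * (finrank ℂ (A.eigenspace μ) : ℂ) := by
    intro μ
    have : B.restrict (hBmaps μ) = μ⁻¹ • (1 : Module.End ℂ (A.eigenspace μ)) := by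
      ext ⟨x, hx⟩
      exact hBapply μ x hx
    rw [this, map_smul, smul_eq_mul, LinearMap.trace_one]
  rw [hA', hB', map_sum]
  refine Finset.sum_congr rfl fun μ hμ ↦ ?_
  have hne : A.eigenspace μ ≠ ⊥ := by simpa using (Set.Finite.mem_toFinset hfin).mp hμ
  rw [hRA, hRB, map_mul, map_natCast, hconj μ hne]

theorem conj_char {K : Type} [Group K] [Finite K] (V : FDRep ℂ K) (g : K) :
    starRingEnd ℂ (V.character g) = V.character g⁻¹ := by
  apply conj_trace_eq (V.ρ g) (V.ρ g⁻¹) (Nat.card K) Nat.card_pos.ne'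
  · rw [← map_pow, pow_card_eq_one', map_one]
  · rw [← map_mul, mul_inv_cancel, map_one]
  · rw [← map_mul, inv_mul_cancel, map_one]

variable {K : Type} [Group K]

/-- Restriction of a representation to an invariant submodule. -/
noncomputable def subrep (V : FDRep ℂ K) (p : Submodule ℂ V)
    (hp : ∀ g : K, ∀ x ∈ p, V.ρ g x ∈ p) : Representation ℂ K p where
  toFun g := (V.ρ g).restrict (hp g)
  map_one' := by ext x; simp [LinearMap.restrict_apply]
  map_mul' g h := by ext x; simp [LinearMap.restrict_apply]

/-- The inclusion of an invariant submodule as a morphism in `FDRep`. -/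
noncomputable def subrepIncl (V : FDRep ℂ K) (p : Submodule ℂ V)
    (hp : ∀ g : K, ∀ x ∈ p, V.ρ g x ∈ p) : FDRep.of (subrep V p hp) ⟶ V where
  hom := ObjectProperty.homMk (ModuleCat.ofHom p.subtype)
  comm g := by
    ext x
    rfl

theorem subrep_eq_top (V : FDRep ℂ K) (hV : Simple V) (p : Submodule ℂ V)
    (hp : ∀ g : K, ∀ x ∈ p, V.ρ g x ∈ p) (hne : p ≠ ⊥) : p = ⊤ := by
  haveI := hV
  obtain ⟨x, hx, hx0⟩ := Submodule.exists_mem_ne_zero_of_ne_bot hne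
  set ι := subrepIncl V p hp
  have hι0 : ι ≠ 0 := by
    intro h
    have : (ι.hom.hom.hom : p →ₗ[ℂ] V) ⟨x, hx⟩ = 0 := by rw [h]; rfl
    exact hx0 this
  have hmono : Mono ι := by
    apply (Action.forget (FGModuleCat ℂ) (MonCat.of K)).mono_of_mono_map
    apply (forget₂ (FGModuleCat ℂ) (ModuleCat ℂ)).mono_of_mono_map
    rw [ModuleCat.mono_iff_injective]
    exact Subtype.val_injective
  haveI := hmono
  have hiso : IsIso ι := isIso_of_mono_of_nonzero hι0
  have := (FDRep.isoToLinearEquiv (asIso ι)).finrank_eq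
  exact Submodule.eq_top_of_finrank_eq (by simpa using this)

theorem finrank_iSup_le {ι : Type} [Fintype ι] [DecidableEq ι] {M : Type} [AddCommGroup M] [Module ℂ M]
    [FiniteDimensional ℂ M] (p : ι → Submodule ℂ M) :
    finrank ℂ ↥(⨆ i, p i) ≤ ∑ i, finrank ℂ ↥(p i) := by
  have key : ∀ s : Finset ι, finrank ℂ ↥(s.sup p) ≤ ∑ i ∈ s, finrank ℂ ↥(p i) := by
    intro s
    induction s using Finset.induction_on with
    | empty => simp
    | @insert a s ha ih =>
      rw [Finset.sup_insert, Finset.sum_insert ha]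
      have h1 := Submodule.finrank_sup_add_finrank_inf_eq (p a) (s.sup p)
      omega
  rw [← Finset.sup_univ_eq_iSup]
  simpa using key Finset.univ


-- ρ g as linear equiv
noncomputable def rhoEquiv {K : Type} [Group K] (V : FDRep ℂ K) (g : K) : (V : Type) ≃ₗ[ℂ] V :=
  LinearEquiv.ofLinear (V.ρ g) (V.ρ g⁻¹)
    (by rw [← Module.End.mul_eq_comp, ← map_mul, mul_inv_cancel, map_one, Module.End.one_eq_id])
    (by rw [← Module.End.mul_eq_comp, ← map_mul, inv_mul_cancel, map_one, Module.End.one_eq_id])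

theorem finrank_map_rho {K : Type} [Group K] (V : FDRep ℂ K) (g : K) (W : Submodule ℂ V) :
    finrank ℂ ↥(W.map (V.ρ g)) = finrank ℂ ↥W := by
  have : W.map (V.ρ g) = W.map ((rhoEquiv V g : (V : Type) ≃ₗ[ℂ] V) : (V:Type) →ₗ[ℂ] V) := rfl
  rw [this, LinearEquiv.finrank_map_eq]

theorem exists_hom_ne_zero [Finite K] (V W : FDRep ℂ K)
    (h : ∑ᶠ g : K, V.character g⁻¹ * W.character g ≠ 0) :
    ∃ f : V ⟶ W, f ≠ 0 := by
  have : Fintype K := Fintype.ofFinite K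
  have hcard : (Fintype.card K : ℂ) ≠ 0 := Nat.cast_ne_zero.mpr Fintype.card_ne_zero
  have : Invertible (Fintype.card K : ℂ) := invertibleOfNonzero hcard
  by_contra hno
  push_neg at hno
  have hzero : ∀ f : V ⟶ W, f = 0 := hno
  have hsub : Subsingleton (V ⟶ W) := ⟨fun f g => by rw [hzero f, hzero g]⟩
  have hfr : finrank ℂ (V ⟶ W) = 0 := by
    rw [finrank_zero_iff_forall_zero]
    exact hzero
  have havg := FDRep.average_char_eq_finrank_invariants (FDRep.of (Representation.linHom V.ρ W.ρ))
  have hchar : ∀ g : K, (FDRep.of (Representation.linHom V.ρ W.ρ)).character g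
      = V.character g⁻¹ * W.character g := fun g => FDRep.char_linHom V W g
  rw [show (FDRep.of (Representation.linHom V.ρ W.ρ)).ρ = Representation.linHom V.ρ W.ρ
      from rfl] at havg
  erw [(Representation.linHom.invariantsEquivFDRepHom (G := K) V W).finrank_eq] at havg
  rw [hfr] at havg
  simp only [hchar] at havg
  rw [finsum_eq_sum_of_fintype] at h
  apply h
  have := havg
  rw [Nat.cast_zero] at this
  have h2 : (Fintype.card K : ℂ) • ((⅟(Fintype.card K : ℂ)) • ∑ g : K, V.character g⁻¹ * W.character g) = 0 := by
    rw [smul_eq_mul, smul_eq_mul, invOf_eq_inv, ← Nat.card_eq_fintype_card, this, mul_zero]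
  rwa [smul_smul, mul_invOf_self, one_smul] at h2

variable {G : Type} [Group G] [Finite G]

theorem key_ineq (H : Subgroup G) (θ : FDRep ℂ ↥H) (hθ : Simple θ) (χ : FDRep ℂ G)
    (hχ : Simple χ) (f : θ ⟶ FDRep.of (χ.ρ.comp H.subtype)) (hf : f ≠ 0) :
    (charKer θ).index * finrank ℂ χ ≤ (charKer χ).index * finrank ℂ θ := by
  classical
  let φ : (θ : Type) →ₗ[ℂ] (χ : Type) := f.hom.hom.hom
  have hcomm : ∀ (h : ↥H) (x : θ), φ (θ.ρ h x) = χ.ρ ↑h (φ x) := by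
    intro h x
    exact LinearMap.congr_fun (congrArg (fun f => f.hom.hom) (f.comm h)) x
  have hφ0 : φ ≠ 0 := by
    intro h0
    apply hf
    apply Action.Hom.ext
    ext1
    exact h0
  -- φ is injective
  have hker : LinearMap.ker φ = ⊥ := by
    by_contra hne
    have heq := subrep_eq_top θ hθ (LinearMap.ker φ) (fun h x hx => by
      rw [LinearMap.mem_ker] at hx ⊢
      rw [hcomm h x, hx, map_zero]) hne
    apply hφ0
    ext x
    have : x ∈ LinearMap.ker φ := heq ▸ Submodule.mem_top
    simpa using this
  have hinj : Function.Injective φ := LinearMap.ker_eq_bot.mp hker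
  set W : Submodule ℂ (χ : Type) := LinearMap.range φ with hW
  have hWrank : finrank ℂ ↥W = finrank ℂ θ := LinearMap.finrank_range_of_inj hinj
  have hWne : W ≠ ⊥ := by
    intro h0
    apply hφ0
    ext x
    have : φ x ∈ W := LinearMap.mem_range_self φ x
    rw [h0] at this
    simpa using this
  -- the stabilizer of W
  set S : Subgroup G := {
    carrier := {g : G | W.map (χ.ρ g) = W}
    one_mem' := by
      simp only [Set.mem_setOf_eq, map_one, Module.End.one_eq_id, Submodule.map_id]
    mul_mem' := by
      intro a b ha hb
      simp only [Set.mem_setOf_eq] at *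
      rw [map_mul, Module.End.mul_eq_comp, Submodule.map_comp, hb, ha]
    inv_mem' := by
      intro a ha
      simp only [Set.mem_setOf_eq] at *
      conv_lhs => rw [← ha]
      rw [← Submodule.map_comp, ← Module.End.mul_eq_comp, ← map_mul, inv_mul_cancel, map_one,
        Module.End.one_eq_id, Submodule.map_id] } with hS
  have hHS : H ≤ S := by
    intro h hh
    show W.map (χ.ρ h) = W
    have : χ.ρ h ∘ₗ φ = φ ∘ₗ θ.ρ ⟨h, hh⟩ := by
      ext x; exact (hcomm ⟨h, hh⟩ x).symm
    rw [hW, ← LinearMap.range_comp, this, LinearMap.range_comp]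
    have hsurj : LinearMap.range (θ.ρ ⟨h, hh⟩) = ⊤ := by
      rw [LinearMap.range_eq_top]
      intro y
      exact ⟨θ.ρ (⟨h, hh⟩)⁻¹ y, by rw [← Module.End.mul_apply, ← map_mul, mul_inv_cancel,
        map_one, Module.End.one_apply]⟩
    rw [hsurj, Submodule.map_top]
  have hKS : charKer χ ≤ S := by
    intro k hk
    show W.map (χ.ρ k) = W
    have hk1 : χ.ρ k = 1 := by
      have : Representation.asGroupHom χ.ρ k = 1 := hk
      have h2 := congrArg Units.val this
      rwa [Representation.asGroupHom_apply] at h2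
    rw [hk1, Module.End.one_eq_id, Submodule.map_id]
  set J : Subgroup G := H ⊔ charKer χ with hJ
  have hJS : J ≤ S := sup_le hHS hKS
  -- the span of all translates of W
  set M : Submodule ℂ (χ : Type) := ⨆ g : G, W.map (χ.ρ g) with hM
  have hMinv : ∀ g : G, ∀ x ∈ M, χ.ρ g x ∈ M := by
    intro g x hx
    have : M.map (χ.ρ g) ≤ M := by
      rw [hM, Submodule.map_iSup]
      apply iSup_le
      intro g'
      rw [← Submodule.map_comp, ← Module.End.mul_eq_comp, ← map_mul]
      exact le_iSup (fun g : G => W.map (χ.ρ g)) (g * g')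
    exact this (Submodule.mem_map_of_mem hx)
  have hMne : M ≠ ⊥ := by
    intro h0
    apply hWne
    have hle : W ≤ M := by
      have := le_iSup (fun g : G => W.map (χ.ρ g)) 1
      rwa [map_one, Module.End.one_eq_id, Submodule.map_id] at this
    rw [h0, le_bot_iff] at hle
    exact hle
  have hMtop : M = ⊤ := subrep_eq_top χ hχ M hMinv hMne
  -- M is the sup over cosets of J
  have : Fintype (G ⧸ J) := Fintype.ofFinite _
  have hMco : M = ⨆ c : G ⧸ J, W.map (χ.ρ (Quotient.out c)) := by
    rw [hM]
    apply le_antisymm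
    · apply iSup_le
      intro g
      obtain ⟨j, hj⟩ := QuotientGroup.mk_out_eq_mul J g
      have : W.map (χ.ρ g) = W.map (χ.ρ (Quotient.out ((g : G ⧸ J)))) := by
        rw [hj, map_mul, Module.End.mul_eq_comp, Submodule.map_comp, hJS j.2]
      rw [this]
      exact le_iSup (fun c : G ⧸ J => W.map (χ.ρ (Quotient.out c))) (g : G ⧸ J)
    · apply iSup_le
      intro c
      exact le_iSup (fun g : G => W.map (χ.ρ g)) (Quotient.out c)
  -- dimension count
  have hdim : finrank ℂ (χ : Type) ≤ J.index * finrank ℂ θ := by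
    have h1 : finrank ℂ ↥M ≤ ∑ _c : G ⧸ J, finrank ℂ ↥W := by
      rw [hMco]
      refine le_trans (finrank_iSup_le _) ?_
      apply Finset.sum_le_sum
      intro c _
      rw [finrank_map_rho]
    rw [hMtop] at h1
    rw [finrank_top] at h1
    rw [Finset.sum_const, Finset.card_univ, smul_eq_mul, hWrank] at h1
    rwa [Subgroup.index, Nat.card_eq_fintype_card]
  -- kernel inclusion
  have hkerle : (charKer χ).subgroupOf H ≤ charKer θ := by
    intro h hh
    have hh' : (h : G) ∈ charKer χ := hh
    have h1 : χ.ρ ↑h = 1 := by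
      have : Representation.asGroupHom χ.ρ ↑h = 1 := hh'
      have h2 := congrArg Units.val this
      rwa [Representation.asGroupHom_apply] at h2
    have h2 : θ.ρ h = 1 := by
      ext x
      apply hinj
      rw [hcomm h x, h1, Module.End.one_apply, Module.End.one_apply]
    show Representation.asGroupHom θ.ρ h = 1
    apply Units.ext
    rw [Representation.asGroupHom_apply, h2, Units.val_one]
  -- index arithmetic
  have hKJ : charKer χ ≤ J := le_sup_right
  have hrel : (charKer χ).relIndex J * J.index = (charKer χ).index :=
    Subgroup.relIndex_mul_index hKJ
  haveI : (charKer χ).Normal := MonoidHom.normal_ker _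
  have hrel2 : (charKer χ).relIndex J = (charKer χ).relIndex H := by
    rw [hJ, Subgroup.relIndex_sup_right]
  have hidx : (charKer θ).index ≤ (charKer χ).relIndex H := by
    have hdvd := Subgroup.index_dvd_of_le hkerle
    refine Nat.le_of_dvd ?_ hdvd
    exact Nat.pos_of_ne_zero (Subgroup.index_ne_zero_of_finite)
  calc (charKer θ).index * finrank ℂ χ
      ≤ (charKer χ).relIndex H * (J.index * finrank ℂ θ) :=
        Nat.mul_le_mul hidx hdim
    _ = ((charKer χ).relIndex J * J.index) * finrank ℂ θ := by rw [hrel2]; ring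
    _ = (charKer χ).index * finrank ℂ θ := by rw [hrel]

theorem frobenius {G : Type} [Group G] [Finite G] (H : Subgroup G)
    (θ : FDRep ℂ ↥H) (χ : FDRep ℂ G)
    (hcons : innerChar G (indChar H θ) χ.character ≠ 0) :
    ∃ f : θ ⟶ FDRep.of (χ.ρ.comp H.subtype), f ≠ 0 := by
  classical
  have : Fintype G := Fintype.ofFinite G
  set Res := FDRep.of (χ.ρ.comp H.subtype) with hRes
  have hResChar : ∀ h : ↥H, Res.character h = χ.character ↑h := fun h => rfl
  apply exists_hom_ne_zero
  rw [finsum_eq_sum_of_fintype]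
  -- reduce hcons to a Finset sum statement
  have h1 : ∑ᶠ x : G, indChar H θ x * starRingEnd ℂ (χ.character x) ≠ 0 := by
    intro h0
    exact hcons (by rw [innerChar, h0, zero_div])
  rw [finsum_eq_sum_of_fintype] at h1
  set D : G → G → ℂ := fun x g =>
    if h : x * g * x⁻¹ ∈ H then θ.character ⟨x * g * x⁻¹, h⟩ else 0 with hD
  have h2 : ∑ g : G, indChar H θ g * starRingEnd ℂ (χ.character g)
      = (∑ g : G, ∑ x : G, D x g * starRingEnd ℂ (χ.character g)) / (Nat.card ↥H) := by
    rw [Finset.sum_div]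
    refine Finset.sum_congr rfl fun g _ => ?_
    rw [indChar, finsum_eq_sum_of_fintype, div_mul_eq_mul_div, Finset.sum_mul]
  rw [h2] at h1
  have h3 : ∑ g : G, ∑ x : G, D x g * starRingEnd ℂ (χ.character g)
      = ∑ x : G, ∑ g : G, D x g * starRingEnd ℂ (χ.character g) := Finset.sum_comm
  rw [h3] at h1
  set S0 : ℂ := ∑ y : G,
      (if h : y ∈ H then θ.character ⟨y, h⟩ else 0) * starRingEnd ℂ (χ.character y) with hS0
  have h4 : ∀ x : G, ∑ g : G, D x g * starRingEnd ℂ (χ.character g) = S0 := by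
    intro x
    rw [hS0]
    apply Fintype.sum_equiv (MulAut.conj x).toEquiv
    intro g
    have he : ((MulAut.conj x).toEquiv g) = x * g * x⁻¹ := rfl
    rw [he, χ.char_conj]
  simp only [h4, Finset.sum_const, Finset.card_univ, nsmul_eq_mul] at h1
  have hSne : S0 ≠ 0 := by
    intro h0
    rw [h0, mul_zero, zero_div] at h1
    exact h1 rfl
  -- rewrite S0 as a sum over the subgroup
  set s : Finset G := (Finset.univ : Finset ↥H).map (Function.Embedding.subtype (· ∈ H)) with hs
  have h5 : S0 = ∑ h : ↥H, θ.character h * starRingEnd ℂ (χ.character ↑h) := by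
    rw [hS0]
    rw [← Finset.sum_subset (Finset.subset_univ s) (fun y _ hy => ?_)]
    · rw [hs, Finset.sum_map]
      refine Finset.sum_congr rfl fun h _ => ?_
      have : (Function.Embedding.subtype (· ∈ H)) h = (h : G) := rfl
      rw [this, dif_pos h.2]
    · have hyH : y ∉ H := by
        intro hmem
        exact hy (by simp [hs, hmem])
      rw [dif_neg hyH, zero_mul]
  have h6 : S0 = ∑ h : ↥H, θ.character h * Res.character h⁻¹ := by
    rw [h5]
    refine Finset.sum_congr rfl fun h _ => ?_
    rw [conj_char, hResChar h⁻¹]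
    norm_cast
  have h7 : ∑ g : ↥H, θ.character g⁻¹ * Res.character g = S0 := by
    rw [h6]
    apply Fintype.sum_equiv (Equiv.inv ↥H)
    intro g
    simp
  rw [h7]
  exact hSne

end StmtAux

theorem stmt_5 {G : Type} [Group G] [Finite G] (H : Subgroup G)
    (θ : FDRep ℂ ↥H) (hθ : Simple θ) (χ : FDRep ℂ G) (hχ : Simple χ)
    (hcons : innerChar G (indChar H θ) χ.character ≠ 0) :
    codeg θ ≤ codeg χ := by
  obtain ⟨f, hf⟩ := StmtAux.frobenius H θ χ hcons
  have hkey := StmtAux.key_ineq H θ hθ χ hχ f hf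
  have hfhom : (f.hom.hom.hom : (θ : Type) →ₗ[ℂ] (χ : Type)) ≠ 0 := fun h0 => hf (Action.Hom.ext (InducedCategory.hom_ext (ModuleCat.hom_ext h0)))
  have hd : 0 < Module.finrank ℂ χ := by
    obtain ⟨x, hx⟩ : ∃ x, (f.hom.hom.hom : (θ : Type) →ₗ[ℂ] (χ : Type)) x ≠ 0 := by
      by_contra h0
      push_neg at h0
      exact hfhom (by ext x; simpa using h0 x)
    have : Nontrivial (χ : Type) := ⟨⟨_, 0, hx⟩⟩
    exact Module.finrank_pos
  rw [codeg, codeg]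
  rcases Nat.eq_zero_or_pos (Module.finrank ℂ θ) with hb | hb
  · rw [hb, Nat.div_zero]
    exact Nat.zero_le _
  · rw [Nat.le_div_iff_mul_le hd]
    calc (charKer θ).index / Module.finrank ℂ θ * Module.finrank ℂ χ
        ≤ (charKer θ).index * Module.finrank ℂ χ / Module.finrank ℂ θ := by
          rw [Nat.le_div_iff_mul_le hb]
          calc (charKer θ).index / Module.finrank ℂ θ * Module.finrank ℂ χ
              * Module.finrank ℂ θ
              = ((charKer θ).index / Module.finrank ℂ θ * Module.finrank ℂ θ)
                * Module.finrank ℂ χ := by ring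
            _ ≤ (charKer θ).index * Module.finrank ℂ χ :=
                Nat.mul_le_mul_right _ (Nat.div_mul_le_self _ _)
      _ ≤ (charKer χ).index * Module.finrank ℂ θ / Module.finrank ℂ θ :=
          Nat.div_le_div_right hkey
      _ = (charKer χ).index := Nat.mul_div_cancel _ hb
end

section
/- Let G be a finite solvable group, N a normal subgroup, and U_N/N = F₂(G/N) the preimage of the second Fitting subgroup of G/N. If G has two distinct minimal normal subgroups N_a and N_b, then F₂(G) = U_{N_a} ∩ U_{N_b}, and consequently the derived length of G/F₂(G) equals the maximum of the derived lengths of G/U_{N_a} and G/U_{N_b}. -/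
open CategoryTheory

/-- `M/N` is nilpotent: some term of the lower central series of `M` lands in `N`. -/
def nilpotentFactor {G : Type} [Group G] (N M : Subgroup G) : Prop :=
  ∃ m : ℕ, (fun K => ⁅K, M⁆)^[m] M ≤ N

/-- The preimage in `G` of the Fitting subgroup of `G/N`: the largest normal subgroup `K`
of `G` with `K/N` nilpotent.  In particular `fitPre ⊥` is the Fitting subgroup `F(G)`,
`fitPre (fitPre ⊥)` is `F₂(G)`, and `fitPre (fitPre N)` is the preimage `U_N` of `F₂(G/N)`. -/
noncomputable def fitPre {G : Type} [Group G] (N : Subgroup G) : Subgroup G :=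
  sSup {K : Subgroup G | K.Normal ∧ nilpotentFactor N K}

/-- The derived length of the quotient `G/M`: the least `n` with `G⁽ⁿ⁾ ≤ M`. -/
noncomputable def dlQuot {G : Type} [Group G] (M : Subgroup G) : ℕ :=
  sInf {n : ℕ | derivedSeries G n ≤ M}

/-- `N` is a minimal normal subgroup of `G`. -/
def IsMinimalNormal {G : Type} [Group G] (N : Subgroup G) : Prop :=
  N.Normal ∧ N ≠ ⊥ ∧ ∀ K : Subgroup G, K.Normal → K ≠ ⊥ → K ≤ N → K = N

section StmtAux

variable {G : Type} [Group G]

open scoped commutatorElement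

/-- Iterated commutator series of `X` inside `G`. -/
private def L (X : Subgroup G) (n : ℕ) : Subgroup G := (fun K => ⁅K, X⁆)^[n] X

private lemma L_zero (X : Subgroup G) : L X 0 = X := rfl

private lemma L_succ (X : Subgroup G) (n : ℕ) : L X (n + 1) = ⁅L X n, X⁆ := by
  simp only [L, Function.iterate_succ_apply']

private lemma L_normal {X : Subgroup G} (hX : X.Normal) (n : ℕ) : (L X n).Normal := by
  induction n with
  | zero => exact hX
  | succ n ih => rw [L_succ]; exact @Subgroup.commutator_normal _ _ _ _ ih hX

private lemma L_mono {X Y : Subgroup G} (h : X ≤ Y) (n : ℕ) : L X n ≤ L Y n := by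
  induction n with
  | zero => exact h
  | succ n ih => rw [L_succ, L_succ]; exact Subgroup.commutator_mono ih h

private lemma L_antitone {X : Subgroup G} (hX : X.Normal) {m n : ℕ} (h : m ≤ n) :
    L X n ≤ L X m := by
  refine antitone_nat_of_succ_le (fun k => ?_) h
  rw [L_succ]
  exact @Subgroup.commutator_le_left _ _ _ _ (L_normal hX k)

private lemma normal_iSup {ι : Sort*} {X : ι → Subgroup G} (hX : ∀ i, (X i).Normal) :
    (⨆ i, X i).Normal := by
  constructor
  intro x hx g
  refine Subgroup.iSup_induction X (C := fun x => g * x * g⁻¹ ∈ ⨆ i, X i) hx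
    (fun i x hxi => Subgroup.mem_iSup_of_mem i ((hX i).conj_mem x hxi g)) (by simpa using one_mem (⨆ i, X i)) ?_
  intro x y hx hy
  have hxy : g * (x * y) * g⁻¹ = (g * x * g⁻¹) * (g * y * g⁻¹) := by group
  rw [hxy]; exact mul_mem hx hy

private lemma commutator_iSup_left {ι : Sort*} (X : ι → Subgroup G) (Z : Subgroup G)
    (hX : ∀ i, (X i).Normal) (hZ : Z.Normal) :
    ⁅⨆ i, X i, Z⁆ = ⨆ i, ⁅X i, Z⁆ := by
  have hR : (⨆ i, ⁅X i, Z⁆).Normal :=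
    normal_iSup fun i => @Subgroup.commutator_normal _ _ _ _ (hX i) hZ
  apply le_antisymm
  · rw [Subgroup.commutator_le]
    intro g hg z hz
    refine Subgroup.iSup_induction X (C := fun g => ⁅g, z⁆ ∈ ⨆ i, ⁅X i, Z⁆) hg
      (fun i x hxi => Subgroup.mem_iSup_of_mem (S := fun i => ⁅X i, Z⁆) i
        (Subgroup.commutator_mem_commutator hxi hz))
      (by simpa using one_mem (⨆ i, ⁅X i, Z⁆)) ?_
    intro x y hx hy
    have hc : ⁅x * y, z⁆ = (x * ⁅y, z⁆ * x⁻¹) * ⁅x, z⁆ := by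
      simp only [commutatorElement_def]; group
    rw [hc]
    exact mul_mem (hR.conj_mem _ hy x) hx
  · exact iSup_le fun i => Subgroup.commutator_mono (le_iSup X i) le_rfl

private lemma commutator_sup_left (A B Z : Subgroup G) (hA : A.Normal) (hB : B.Normal)
    (hZ : Z.Normal) : ⁅A ⊔ B, Z⁆ = ⁅A, Z⁆ ⊔ ⁅B, Z⁆ := by
  have hR : (⁅A, Z⁆ ⊔ ⁅B, Z⁆).Normal :=
    @Subgroup.sup_normal _ _ _ _ (@Subgroup.commutator_normal _ _ _ _ hA hZ)
      (@Subgroup.commutator_normal _ _ _ _ hB hZ)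
  apply le_antisymm
  · rw [Subgroup.commutator_le]
    intro g hg z hz
    haveI := hB
    have hmem : (g : G) ∈ (↑(A ⊔ B) : Set G) := hg
    rw [Subgroup.mul_normal] at hmem
    obtain ⟨a, ha', b, hb', rfl⟩ := hmem
    have hc : ⁅a * b, z⁆ = (a * ⁅b, z⁆ * a⁻¹) * ⁅a, z⁆ := by
      simp only [commutatorElement_def]; group
    rw [hc]
    exact mul_mem
      (hR.conj_mem _ (Subgroup.mem_sup_right (Subgroup.commutator_mem_commutator hb' hz)) a)
      (Subgroup.mem_sup_left (Subgroup.commutator_mem_commutator ha' hz))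
  · exact sup_le (Subgroup.commutator_mono le_sup_left le_rfl)
      (Subgroup.commutator_mono le_sup_right le_rfl)

private def L' (X : Subgroup G) : ℕ → Subgroup G
  | 0 => ⊤
  | (k + 1) => L X k

private lemma L'_normal {X : Subgroup G} (hX : X.Normal) (k : ℕ) : (L' X k).Normal := by
  cases k with
  | zero => exact ⟨fun n _ g => Subgroup.mem_top _⟩
  | succ k => exact L_normal hX k

private lemma L'_comm_le {X : Subgroup G} (hX : X.Normal) (k : ℕ) :
    ⁅L' X k, X⁆ ≤ L' X (k + 1) := by
  cases k with
  | zero => exact @Subgroup.commutator_le_right _ _ _ _ hX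
  | succ k => rw [show L' X (k + 1 + 1) = L X (k + 1) from rfl, L_succ]; exact le_rfl

private def P (A B : Subgroup G) (n : ℕ) : Subgroup G :=
  ⨆ i : Fin (n + 1), (L' A i ⊓ L' B (n - i))

private lemma P_comp_normal {A B : Subgroup G} (hA : A.Normal) (hB : B.Normal) (n : ℕ)
    (i : Fin (n + 1)) : (L' A i ⊓ L' B (n - i)).Normal :=
  @Subgroup.normal_inf_normal _ _ _ _ (L'_normal hA _) (L'_normal hB _)

private lemma P_normal {A B : Subgroup G} (hA : A.Normal) (hB : B.Normal) (n : ℕ) :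
    (P A B n).Normal :=
  normal_iSup (P_comp_normal hA hB n)

private lemma L_le_P {A B : Subgroup G} (hA : A.Normal) (hB : B.Normal) (n : ℕ) :
    L (A ⊔ B) n ≤ P A B (n + 1) := by
  induction n with
  | zero =>
    rw [L_zero]
    apply sup_le
    · refine le_trans ?_ (le_iSup (fun i : Fin 2 => L' A i ⊓ L' B (1 - (i : ℕ))) (1 : Fin 2))
      simp [L', L]
    · refine le_trans ?_ (le_iSup (fun i : Fin 2 => L' A i ⊓ L' B (1 - (i : ℕ))) (0 : Fin 2))
      simp [L', L]
  | succ n ih =>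
    have hPn : (P A B (n + 1)).Normal := P_normal hA hB (n + 1)
    have hAB : (A ⊔ B).Normal := @Subgroup.sup_normal _ _ A B hA hB
    have step1 : L (A ⊔ B) (n + 1) ≤ ⁅P A B (n + 1), A⁆ ⊔ ⁅P A B (n + 1), B⁆ := by
      rw [L_succ]
      calc ⁅L (A ⊔ B) n, A ⊔ B⁆ ≤ ⁅P A B (n + 1), A ⊔ B⁆ :=
            Subgroup.commutator_mono ih le_rfl
        _ = ⁅A ⊔ B, P A B (n + 1)⁆ := Subgroup.commutator_comm _ _
        _ = ⁅A, P A B (n + 1)⁆ ⊔ ⁅B, P A B (n + 1)⁆ := commutator_sup_left _ _ _ hA hB hPn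
        _ = ⁅P A B (n + 1), A⁆ ⊔ ⁅P A B (n + 1), B⁆ := by
            rw [Subgroup.commutator_comm A, Subgroup.commutator_comm B]
    refine step1.trans (sup_le ?_ ?_)
    · rw [show P A B (n + 1) = ⨆ i : Fin (n + 2), (L' A i ⊓ L' B (n + 1 - i)) from rfl,
        commutator_iSup_left _ _ (P_comp_normal hA hB (n + 1)) hA]
      refine iSup_le fun i => ?_
      have hi : (i : ℕ) ≤ n + 1 := Nat.lt_succ_iff.mp i.2
      refine le_trans ?_
        (le_iSup (fun j : Fin (n + 3) => L' A j ⊓ L' B (n + 2 - (j : ℕ)))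
          (⟨(i : ℕ) + 1, by omega⟩ : Fin (n + 3)))
      show ⁅L' A i ⊓ L' B (n + 1 - i), A⁆ ≤ L' A ((i : ℕ) + 1) ⊓ L' B (n + 2 - ((i : ℕ) + 1))
      have harith : n + 2 - ((i : ℕ) + 1) = n + 1 - (i : ℕ) := by omega
      rw [harith]
      refine le_inf ?_ ?_
      · exact (Subgroup.commutator_mono inf_le_left le_rfl).trans (L'_comm_le hA i)
      · exact (Subgroup.commutator_mono inf_le_right le_rfl).trans
          (@Subgroup.commutator_le_left _ _ _ _ (L'_normal hB _))
    · rw [show P A B (n + 1) = ⨆ i : Fin (n + 2), (L' A i ⊓ L' B (n + 1 - i)) from rfl,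
        commutator_iSup_left _ _ (P_comp_normal hA hB (n + 1)) hB]
      refine iSup_le fun i => ?_
      have hi : (i : ℕ) ≤ n + 1 := Nat.lt_succ_iff.mp i.2
      refine le_trans ?_
        (le_iSup (fun j : Fin (n + 3) => L' A j ⊓ L' B (n + 2 - (j : ℕ)))
          (⟨(i : ℕ), by omega⟩ : Fin (n + 3)))
      show ⁅L' A i ⊓ L' B (n + 1 - i), B⁆ ≤ L' A (i : ℕ) ⊓ L' B (n + 2 - (i : ℕ))
      have harith : n + 2 - (i : ℕ) = (n + 1 - (i : ℕ)) + 1 := by omega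
      rw [harith]
      refine le_inf ?_ ?_
      · exact (Subgroup.commutator_mono inf_le_left le_rfl).trans
          (@Subgroup.commutator_le_left _ _ _ _ (L'_normal hA _))
      · exact (Subgroup.commutator_mono inf_le_right le_rfl).trans (L'_comm_le hB _)

private lemma fitting {N A B : Subgroup G} (hA : A.Normal) (hB : B.Normal)
    {ma mb : ℕ} (hLa : L A ma ≤ N) (hLb : L B mb ≤ N) :
    L (A ⊔ B) (ma + mb + 1) ≤ N := by
  refine (L_le_P hA hB (ma + mb + 1)).trans (iSup_le fun i => ?_)
  have hi : (i : ℕ) ≤ ma + mb + 2 := Nat.lt_succ_iff.mp i.2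
  rcases le_or_gt (i : ℕ) ma with h | h
  · refine le_trans inf_le_right (le_trans ?_ hLb)
    obtain ⟨k, hk, hmk⟩ : ∃ k, ma + mb + 2 - (i : ℕ) = k + 1 ∧ mb ≤ k :=
      ⟨ma + mb + 1 - (i : ℕ), by omega⟩
    rw [hk]
    exact L_antitone hB hmk
  · refine le_trans inf_le_left (le_trans ?_ hLa)
    obtain ⟨k, hk, hmk⟩ : ∃ k, (i : ℕ) = k + 1 ∧ ma ≤ k := ⟨(i : ℕ) - 1, by omega⟩
    rw [hk]
    exact L_antitone hA hmk

private lemma nilpotentFactor_iff {N M : Subgroup G} :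
    nilpotentFactor N M ↔ ∃ m, L M m ≤ N := Iff.rfl

private lemma le_fitPre {N K : Subgroup G} (hn : K.Normal) (h : nilpotentFactor N K) :
    K ≤ fitPre N :=
  le_sSup ⟨hn, h⟩

private lemma fitPre_mono {N N' : Subgroup G} (h : N ≤ N') : fitPre N ≤ fitPre N' :=
  sSup_le_sSup fun K hK => ⟨hK.1, hK.2.imp fun _ hm => hm.trans h⟩

private lemma fitPre_spec [Finite G] (N : Subgroup G) :
    (fitPre N).Normal ∧ nilpotentFactor N (fitPre N) := by
  haveI : Finite (Subgroup G) :=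
    Finite.of_injective (fun H : Subgroup G => (H : Set G)) SetLike.coe_injective
  have hfin : ({K : Subgroup G | K.Normal ∧ nilpotentFactor N K}).Finite := Set.toFinite _
  have heq : fitPre N = hfin.toFinset.sup id := by
    rw [Finset.sup_id_eq_sSup, Set.Finite.coe_toFinset]; rfl
  rw [heq]
  refine Finset.sup_induction (p := fun K : Subgroup G => K.Normal ∧ nilpotentFactor N K)
    ⟨⟨fun n hn g => by simpa using hn⟩, 0, bot_le⟩ ?_ ?_
  · rintro K1 ⟨h1n, m1, h1⟩ K2 ⟨h2n, m2, h2⟩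
    exact ⟨@Subgroup.sup_normal _ _ K1 K2 h1n h2n, m1 + m2 + 1, fitting h1n h2n h1 h2⟩
  · intro K hK
    exact hfin.mem_toFinset.mp hK

private lemma derivedSeries_le_of_le {n m : ℕ} (h : n ≤ m) {M : Subgroup G}
    (hd : derivedSeries G n ≤ M) : derivedSeries G m ≤ M := by
  refine le_trans ?_ hd
  refine antitone_nat_of_succ_le (fun k => ?_) h
  rw [derivedSeries_succ]
  exact @Subgroup.commutator_le_left _ _ _ _ (derivedSeries_normal G k)

end StmtAux

theorem stmt_18 {G : Type} [Group G] [Finite G] (hsol : IsSolvable G)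
    (Na Nb : Subgroup G) (ha : IsMinimalNormal Na) (hb : IsMinimalNormal Nb)
    (hne : Na ≠ Nb) :
    fitPre (fitPre (⊥ : Subgroup G)) = fitPre (fitPre Na) ⊓ fitPre (fitPre Nb) ∧
    dlQuot (fitPre (fitPre (⊥ : Subgroup G))) =
      max (dlQuot (fitPre (fitPre Na))) (dlQuot (fitPre (fitPre Nb))) := by
  classical
  have hainf : Na ⊓ Nb = ⊥ := by
    by_contra hbot
    have hnorm : (Na ⊓ Nb).Normal := @Subgroup.normal_inf_normal _ _ Na Nb ha.1 hb.1
    exact hne ((ha.2.2 _ hnorm hbot inf_le_left).symm.trans (hb.2.2 _ hnorm hbot inf_le_right))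
  obtain ⟨hFa_n, mFa, hFa⟩ := fitPre_spec Na
  obtain ⟨hFb_n, mFb, hFb⟩ := fitPre_spec Nb
  obtain ⟨hUa_n, mUa, hUa⟩ := fitPre_spec (fitPre Na)
  obtain ⟨hUb_n, mUb, hUb⟩ := fitPre_spec (fitPre Nb)
  have hFab_n : (fitPre Na ⊓ fitPre Nb).Normal :=
    @Subgroup.normal_inf_normal _ _ _ _ hFa_n hFb_n
  have hFab : fitPre Na ⊓ fitPre Nb ≤ fitPre (⊥ : Subgroup G) := by
    refine le_fitPre hFab_n ⟨max mFa mFb, ?_⟩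
    have l1 : L (fitPre Na ⊓ fitPre Nb) (max mFa mFb) ≤ Na :=
      (L_antitone hFab_n (le_max_left _ _)).trans ((L_mono inf_le_left _).trans hFa)
    have l2 : L (fitPre Na ⊓ fitPre Nb) (max mFa mFb) ≤ Nb :=
      (L_antitone hFab_n (le_max_right _ _)).trans ((L_mono inf_le_right _).trans hFb)
    exact hainf ▸ le_inf l1 l2
  have hW_n : (fitPre (fitPre Na) ⊓ fitPre (fitPre Nb)).Normal :=
    @Subgroup.normal_inf_normal _ _ _ _ hUa_n hUb_n
  have hW : nilpotentFactor (fitPre (⊥ : Subgroup G))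
      (fitPre (fitPre Na) ⊓ fitPre (fitPre Nb)) := by
    refine ⟨max mUa mUb, le_trans (le_inf ?_ ?_) hFab⟩
    · exact (L_antitone hW_n (le_max_left _ _)).trans ((L_mono inf_le_left _).trans hUa)
    · exact (L_antitone hW_n (le_max_right _ _)).trans ((L_mono inf_le_right _).trans hUb)
  have hmain : fitPre (fitPre (⊥ : Subgroup G)) = fitPre (fitPre Na) ⊓ fitPre (fitPre Nb) :=
    le_antisymm
      (le_inf (fitPre_mono (fitPre_mono bot_le)) (fitPre_mono (fitPre_mono bot_le)))
      (le_fitPre hW_n hW)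
  refine ⟨hmain, ?_⟩
  rw [hmain]
  obtain ⟨ns, hns⟩ := (isSolvable_def G).mp hsol
  set SA := {n | derivedSeries G n ≤ fitPre (fitPre Na)} with hSA_def
  set SB := {n | derivedSeries G n ≤ fitPre (fitPre Nb)} with hSB_def
  have hSAne : SA.Nonempty := ⟨ns, by simp only [hSA_def, Set.mem_setOf_eq, hns]; exact bot_le⟩
  have hSBne : SB.Nonempty := ⟨ns, by simp only [hSB_def, Set.mem_setOf_eq, hns]; exact bot_le⟩
  have hset : {n | derivedSeries G n ≤ fitPre (fitPre Na) ⊓ fitPre (fitPre Nb)} = SA ∩ SB := by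
    ext n
    simp only [hSA_def, hSB_def, Set.mem_setOf_eq, Set.mem_inter_iff, le_inf_iff]
  have hA0 : sInf SA ∈ SA := Nat.sInf_mem hSAne
  have hB0 : sInf SB ∈ SB := Nat.sInf_mem hSBne
  have hmaxA : max (sInf SA) (sInf SB) ∈ SA := derivedSeries_le_of_le (le_max_left _ _) hA0
  have hmaxB : max (sInf SA) (sInf SB) ∈ SB := derivedSeries_le_of_le (le_max_right _ _) hB0
  show sInf {n | derivedSeries G n ≤ fitPre (fitPre Na) ⊓ fitPre (fitPre Nb)} =
    max (sInf SA) (sInf SB)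
  rw [hset]
  have hABne : (SA ∩ SB).Nonempty := ⟨max (sInf SA) (sInf SB), hmaxA, hmaxB⟩
  have hmem := Nat.sInf_mem hABne
  exact le_antisymm (Nat.sInf_le ⟨hmaxA, hmaxB⟩)
    (max_le (Nat.sInf_le hmem.1) (Nat.sInf_le hmem.2))
end

section
/- Let G be a finite solvable group with a unique minimal normal subgroup N, Φ(G) = 1, and write G = H ⋉ N for a maximal subgroup H. Then for every nontrivial linear character λ of N with H-orbit size s = |H : I_H(λ)|, there is a faithful irreducible character χ of G of degree s; consequently the number of distinct nontrivial orbit sizes of H acting on Irr(N) is at most |cod(G)|. -/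
open CategoryTheory

/-- The conjugate `λᵍ` of a linear character `λ` of a normal subgroup `N ⊴ G`,
given by `λᵍ(n) = λ(g⁻¹ n g)`. -/
def conjChar {G : Type} [Group G] (N : Subgroup G) (hN : N.Normal) (g : G)
    (lam : ↥N →* ℂˣ) : ↥N →* ℂˣ :=
  letI := hN
  lam.comp (MulAut.conjNormal g⁻¹).toMonoidHom

/-- `V` is the unique minimal normal subgroup of `G`. -/
def IsUniqueMinimalNormal {G : Type} [Group G] (V : Subgroup G) : Prop :=
  V.Normal ∧ V ≠ ⊥ ∧ ∀ N : Subgroup G, N.Normal → N ≠ ⊥ → V ≤ N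

namespace Cliff

variable {G : Type} [Group G] {N : Subgroup G} (hN : N.Normal) (lam : ↥N →* ℂˣ)

theorem conjChar_apply (g : G) (n : ↥N) :
    conjChar N hN g lam n = lam (letI := hN; (MulAut.conjNormal g⁻¹) n) := rfl

theorem conjChar_apply' (g : G) (n : ↥N) (m : ↥N) (hm : (m : G) = g⁻¹ * n * g) :
    conjChar N hN g lam n = lam m := by
  letI := hN
  rw [conjChar_apply]
  congr 1
  ext
  rw [hm, MulAut.conjNormal_apply]
  group

theorem conjChar_one : conjChar N hN 1 lam = lam := by
  letI := hN
  ext n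
  rw [conjChar_apply' hN lam 1 n n (by group)]

theorem conjChar_mul (g g' : G) :
    conjChar N hN (g * g') lam = conjChar N hN g (conjChar N hN g' lam) := by
  letI := hN
  ext n
  rw [conjChar_apply' hN lam (g*g') n ⟨(g*g')⁻¹ * n * (g*g'), hN.conj_mem' _ n.2 _⟩ rfl]
  rw [conjChar_apply' hN _ g n ⟨g⁻¹ * n * g, hN.conj_mem' _ n.2 _⟩ rfl]
  rw [conjChar_apply' hN lam g' _ ⟨(g*g')⁻¹ * n * (g*g'), hN.conj_mem' _ n.2 _⟩ (by simp; group)]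

theorem conjChar_of_mem {n : G} (hn : n ∈ N) : conjChar N hN n lam = lam := by
  letI := hN
  ext m
  rw [conjChar_apply' hN lam n m (⟨n, hn⟩⁻¹ * m * ⟨n, hn⟩) rfl]
  simp [mul_comm]

/-- The inertia group of `lam` in `G`. -/
def inertia : Subgroup G where
  carrier := {g | conjChar N hN g lam = lam}
  one_mem' := conjChar_one hN lam
  mul_mem' := by
    intro a b ha hb
    simp only [Set.mem_setOf_eq] at *
    rw [conjChar_mul, hb, ha]
  inv_mem' := by
    intro a ha
    simp only [Set.mem_setOf_eq] at *
    conv_lhs => rw [← ha]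
    rw [← conjChar_mul, inv_mul_cancel, conjChar_one]

theorem mem_inertia {g : G} : g ∈ inertia hN lam ↔ conjChar N hN g lam = lam := Iff.rfl

theorem N_le_inertia : N ≤ inertia hN lam := fun n hn => conjChar_of_mem hN lam hn

theorem conjChar_eq_iff (x y : G) :
    conjChar N hN x lam = conjChar N hN y lam ↔ (x : G ⧸ inertia hN lam) = y := by
  rw [eq_comm (b := (y : G ⧸ inertia hN lam)), QuotientGroup.eq, mem_inertia]
  constructor
  · intro h
    rw [conjChar_mul, h, ← conjChar_mul, inv_mul_cancel, conjChar_one]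
  · intro h
    calc conjChar N hN x lam = conjChar N hN (y * (y⁻¹ * x)) lam := by
          rw [mul_inv_cancel_left]
      _ = conjChar N hN y (conjChar N hN (y⁻¹ * x) lam) := conjChar_mul hN lam y (y⁻¹ * x)
      _ = conjChar N hN y lam := by rw [h]

end Cliff

namespace Cliff

variable {G : Type} [Group G] {N : Subgroup G} (hN : N.Normal) (lam : ↥N →* ℂˣ)
variable {H : Subgroup G}

theorem lam_congr {a b : G} (ha : a ∈ N) (hb : b ∈ N) (h : a = b) :
    lam ⟨a, ha⟩ = lam ⟨b, hb⟩ := by subst h; rfl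

theorem compl_equiv_eq (hcompl : H.IsComplement' N) {h n : G} (hh : h ∈ H) (hn : n ∈ N) :
    hcompl.equiv (h * n) = (⟨h, hh⟩, ⟨n, hn⟩) := by
  rw [Equiv.apply_eq_iff_eq_symm_apply]
  rfl

/-- The canonical extension of `lam` to its inertia group, via the complement `H`. -/
noncomputable def lamT (hcompl : H.IsComplement' N) : ↥(inertia hN lam) →* ℂˣ :=
  MonoidHom.mk' (fun x => lam ⟨(hcompl.equiv ↑x).2,
      ((hcompl.equiv (↑x : G)).2).2⟩) (by
    intro x y
    have hx := hcompl.equiv_fst_mul_equiv_snd (↑x : G)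
    have hy := hcompl.equiv_fst_mul_equiv_snd (↑y : G)
    set h₁ : G := ↑(hcompl.equiv (↑x : G)).1 with hh₁
    set n₁ : G := ↑(hcompl.equiv (↑x : G)).2 with hn₁
    set h₂ : G := ↑(hcompl.equiv (↑y : G)).1 with hh₂
    set n₂ : G := ↑(hcompl.equiv (↑y : G)).2 with hn₂
    have h₁H : h₁ ∈ H := ((hcompl.equiv (↑x : G)).1).2
    have h₂H : h₂ ∈ H := ((hcompl.equiv (↑y : G)).1).2
    have n₁N : n₁ ∈ N := ((hcompl.equiv (↑x : G)).2).2
    have n₂N : n₂ ∈ N := ((hcompl.equiv (↑y : G)).2).2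
    have hdecomp : (↑(x*y) : G) = (h₁ * h₂) * ((h₂⁻¹ * n₁ * h₂) * n₂) := by
      push_cast
      rw [← hx, ← hy]
      group
    have hmemN : (h₂⁻¹ * n₁ * h₂) * n₂ ∈ N :=
      N.mul_mem (hN.conj_mem' _ n₁N h₂) n₂N
    have key : hcompl.equiv ↑(x*y) = (⟨h₁ * h₂, H.mul_mem h₁H h₂H⟩, ⟨(h₂⁻¹ * n₁ * h₂) * n₂, hmemN⟩) := by
      rw [hdecomp]
      exact compl_equiv_eq hcompl (H.mul_mem h₁H h₂H) hmemN
    have val2 : ((hcompl.equiv (↑(x*y) : G)).2 : G) = (h₂⁻¹ * n₁ * h₂) * n₂ :=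
      congrArg (fun p => ((p.2 : G) : G)) key
    have h₂I : h₂ ∈ inertia hN lam := by
      have : h₂ = ↑y * n₂⁻¹ := by rw [← hy]; group
      rw [this]
      exact (inertia hN lam).mul_mem y.2 ((inertia hN lam).inv_mem (N_le_inertia hN lam n₂N))
    have kc : lam ⟨h₂⁻¹ * n₁ * h₂, hN.conj_mem' _ n₁N h₂⟩ = lam ⟨n₁, n₁N⟩ := by
      rw [← conjChar_apply' hN lam h₂ ⟨n₁, n₁N⟩ _ rfl, (mem_inertia hN lam).mp h₂I]
    calc lam ⟨(hcompl.equiv (↑(x*y) : G)).2, ((hcompl.equiv (↑(x*y) : G)).2).2⟩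
        = lam ⟨(h₂⁻¹ * n₁ * h₂) * n₂, hmemN⟩ := lam_congr lam _ _ val2
      _ = lam (⟨h₂⁻¹ * n₁ * h₂, hN.conj_mem' _ n₁N h₂⟩ * ⟨n₂, n₂N⟩) := by rfl
      _ = lam ⟨h₂⁻¹ * n₁ * h₂, hN.conj_mem' _ n₁N h₂⟩ * lam ⟨n₂, n₂N⟩ := map_mul _ _ _
      _ = lam ⟨n₁, n₁N⟩ * lam ⟨n₂, n₂N⟩ := by rw [kc])

theorem lamT_apply (hcompl : H.IsComplement' N) (x : ↥(inertia hN lam)) :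
    lamT hN lam hcompl x = lam ⟨(hcompl.equiv ↑x).2, ((hcompl.equiv (↑x : G)).2).2⟩ := rfl

theorem lamT_eq (hcompl : H.IsComplement' N) (x : ↥(inertia hN lam)) {h n : G}
    (hh : h ∈ H) (hn : n ∈ N) (hx : (x : G) = h * n) :
    lamT hN lam hcompl x = lam ⟨n, hn⟩ := by
  rw [lamT_apply]
  have : hcompl.equiv ↑x = (⟨h, hh⟩, ⟨n, hn⟩) := by rw [hx]; exact compl_equiv_eq hcompl hh hn
  exact lam_congr lam _ _ (congrArg (fun p => ((p.2 : G) : G)) this)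

theorem lamT_extends (hcompl : H.IsComplement' N) {n : G} (hn : n ∈ N) :
    lamT hN lam hcompl ⟨n, N_le_inertia hN lam hn⟩ = lam ⟨n, hn⟩ :=
  lamT_eq hN lam hcompl _ H.one_mem hn (by rw [one_mul])

theorem conjChar_mem_orbitSet (hcompl : H.IsComplement' N) (x : G) :
    conjChar N hN x lam ∈ {μ : ↥N →* ℂˣ | ∃ h ∈ H, μ = conjChar N hN h lam} := by
  have hx := hcompl.equiv_fst_mul_equiv_snd x
  refine ⟨(hcompl.equiv x).1, ((hcompl.equiv x).1).2, ?_⟩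
  conv_lhs => rw [← hx]
  rw [conjChar_mul, conjChar_of_mem hN lam ((hcompl.equiv x).2).2]

noncomputable def orbitEquiv (hcompl : H.IsComplement' N) :
    (G ⧸ inertia hN lam) ≃ {μ : ↥N →* ℂˣ | ∃ h ∈ H, μ = conjChar N hN h lam} := by
  refine Equiv.ofBijective
    (fun q => ⟨conjChar N hN q.out lam, conjChar_mem_orbitSet hN lam hcompl q.out⟩) ⟨?_, ?_⟩
  · intro q q' hqq
    have := (conjChar_eq_iff hN lam q.out q'.out).mp (by simpa using hqq)
    calc q = ((q.out : G) : G ⧸ inertia hN lam) := (q.out_eq').symm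
      _ = ((q'.out : G) : G ⧸ inertia hN lam) := this
      _ = q' := q'.out_eq'
  · rintro ⟨μ, h, hh, rfl⟩
    refine ⟨(h : G ⧸ inertia hN lam), Subtype.ext ?_⟩
    exact (conjChar_eq_iff hN lam _ h).mpr (((h : G ⧸ inertia hN lam)).out_eq')

theorem ncard_orbitSet (hcompl : H.IsComplement' N) :
    Set.ncard {μ : ↥N →* ℂˣ | ∃ h ∈ H, μ = conjChar N hN h lam}
      = Nat.card (G ⧸ inertia hN lam) :=
  (Nat.card_coe_set_eq _).symm.trans (Nat.card_congr (orbitEquiv hN lam hcompl).symm)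

end Cliff

section
variable {G : Type} [Group G] {N : Subgroup G} {I : Subgroup G} (lamT : ↥I →* ℂˣ)

namespace Cliff

/-- The space of the induced representation. -/
noncomputable def Wmod : Submodule ℂ (G → ℂ) where
  carrier := {f | ∀ (x : G) (i : ↥I), f (x * i) = ((lamT i)⁻¹ : ℂˣ) * f x}
  add_mem' := by
    intro a b ha hb x i
    simp only [Pi.add_apply, ha x i, hb x i]
    ring
  zero_mem' := by intro x i; simp
  smul_mem' := by
    intro c f hf x i
    simp only [Pi.smul_apply, hf x i, smul_eq_mul]
    ring

theorem mem_Wmod {f : G → ℂ} :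
    f ∈ Wmod lamT ↔ ∀ (x : G) (i : ↥I), f (x * i) = ((lamT i)⁻¹ : ℂˣ) * f x := Iff.rfl

open scoped Classical in
/-- The weighted indicator function of the coset `x I`. -/
noncomputable def eFun (x : G) : G → ℂ :=
  fun y => if h : x⁻¹ * y ∈ I then (((lamT ⟨x⁻¹ * y, h⟩)⁻¹ : ℂˣ) : ℂ) else 0

theorem eFun_mem (x : G) : eFun lamT x ∈ Wmod lamT := by
  intro y i
  by_cases h : x⁻¹ * y ∈ I
  · have h' : x⁻¹ * (y * i) ∈ I := by
      rw [← mul_assoc]; exact I.mul_mem h i.2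
    have : (⟨x⁻¹ * (y * i), h'⟩ : ↥I) = ⟨x⁻¹ * y, h⟩ * i := by
      ext; simp [mul_assoc]
    simp only [eFun, dif_pos h, dif_pos h', this, map_mul]
    push_cast
    ring
  · have h' : ¬ (x⁻¹ * (y * i) ∈ I) := by
      intro hc
      apply h
      have : x⁻¹ * y = (x⁻¹ * (y * i)) * (i : G)⁻¹ := by group
      rw [this]
      exact I.mul_mem hc (I.inv_mem i.2)
    simp [eFun, dif_neg h, dif_neg h']

theorem eFun_apply_one (x : G) : eFun lamT x x = 1 := by
  have h : x⁻¹ * x ∈ I := by simp [I.one_mem]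
  have : (⟨x⁻¹ * x, h⟩ : ↥I) = 1 := by ext; simp
  simp [eFun, dif_pos h, this]
  exact map_one lamT

theorem eFun_ne_zero (x : G) : eFun lamT x ≠ 0 := by
  intro hc
  have := congrFun hc x
  rw [eFun_apply_one] at this
  simp at this

open scoped Classical in
theorem eFun_eq_aux (a b : G) (h : a = b) :
    (if ha : a ∈ I then (((lamT ⟨a, ha⟩)⁻¹ : ℂˣ) : ℂ) else 0)
      = (if hb : b ∈ I then (((lamT ⟨b, hb⟩)⁻¹ : ℂˣ) : ℂ) else 0) := by
  subst h; rfl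

theorem eFun_apply_ne {x y : G} (h : ¬ (x⁻¹ * y ∈ I)) : eFun lamT x y = 0 := by
  simp [eFun, dif_neg h]

/-- Translation action on functions. -/
def shift (g : G) : (G → ℂ) →ₗ[ℂ] (G → ℂ) where
  toFun f := fun x => f (g⁻¹ * x)
  map_add' := by intros; rfl
  map_smul' := by intros; rfl

theorem shift_mapsTo (g : G) {f : G → ℂ} (hf : f ∈ Wmod lamT) :
    shift g f ∈ Wmod lamT := by
  intro x i
  simp only [shift, LinearMap.coe_mk, AddHom.coe_mk]
  rw [← mul_assoc]
  exact hf (g⁻¹ * x) i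

/-- The induced representation. -/
noncomputable def indRep : Representation ℂ G ↥(Wmod lamT) where
  toFun g := (shift (G := G) g).restrict (fun f hf => shift_mapsTo lamT g hf)
  map_one' := by
    ext f x
    show (f : G → ℂ) (1⁻¹ * x) = (f : G → ℂ) x
    rw [inv_one, one_mul]
  map_mul' := by
    intro g g'
    ext f x
    show (f : G → ℂ) ((g * g')⁻¹ * x) = (f : G → ℂ) (g'⁻¹ * (g⁻¹ * x))
    rw [mul_inv_rev, mul_assoc]

theorem indRep_apply (g : G) (f : ↥(Wmod lamT)) (x : G) :
    ((indRep lamT g f : ↥(Wmod lamT)) : G → ℂ) x = (f : G → ℂ) (g⁻¹ * x) := rfl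

theorem indRep_eFun (g x : G) :
    indRep lamT g ⟨eFun lamT x, eFun_mem lamT x⟩ = ⟨eFun lamT (g * x), eFun_mem lamT _⟩ := by
  ext y
  show eFun lamT x (g⁻¹ * y) = eFun lamT (g * x) y
  exact eFun_eq_aux lamT _ _ (by group)

theorem coset_iff (x y : G) : x⁻¹ * y ∈ I ↔ (x : G ⧸ I) = y := (QuotientGroup.eq).symm

theorem eFun_apply_of_coset {x y : G} (h : x⁻¹ * y ∈ I) :
    eFun lamT x y = (((lamT ⟨x⁻¹ * y, h⟩)⁻¹ : ℂˣ) : ℂ) := by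
  simp [eFun, dif_pos h]

/-- The basis element for the coset of `q`. -/
noncomputable def eW (q : G ⧸ I) : ↥(Wmod lamT) :=
  ⟨eFun lamT q.out, eFun_mem lamT q.out⟩

theorem out_coset_eq (q : G ⧸ I) : ((q.out : G) : G ⧸ I) = q := q.out_eq'

theorem eW_apply_eq_zero {q : G ⧸ I} {y : G} (h : q ≠ (y : G ⧸ I)) :
    (eW lamT q : G → ℂ) y = 0 := by
  apply eFun_apply_ne
  intro hc
  exact h ((out_coset_eq q).symm.trans ((coset_iff (I := I) q.out y).mp hc))

theorem sum_eW_apply [Fintype (G ⧸ I)] (c : (G ⧸ I) → ℂ) (y : G) :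
    ((∑ q : G ⧸ I, c q • eW lamT q : ↥(Wmod lamT)) : G → ℂ) y
      = c (y : G ⧸ I) * (eW lamT (y : G ⧸ I) : G → ℂ) y := by
  have hcoe : ((∑ q : G ⧸ I, c q • eW lamT q : ↥(Wmod lamT)) : G → ℂ)
      = ∑ q : G ⧸ I, c q • (eW lamT q : G → ℂ) := by
    push_cast
    rfl
  rw [hcoe, Finset.sum_apply]
  simp only [Pi.smul_apply, smul_eq_mul]
  apply Finset.sum_eq_single_of_mem _ (Finset.mem_univ _)
  intro q _ hq
  rw [eW_apply_eq_zero lamT hq, mul_zero]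

theorem eW_apply_self (q : G ⧸ I) {y : G} (h : q = (y : G ⧸ I)) :
    (eW lamT q : G → ℂ) y = (((lamT ⟨(q.out)⁻¹ * y, (coset_iff _ _).mpr
      ((out_coset_eq q).trans h)⟩)⁻¹ : ℂˣ) : ℂ) :=
  eFun_apply_of_coset lamT _

theorem eW_spanning [Fintype (G ⧸ I)] (f : ↥(Wmod lamT)) :
    f = ∑ q : G ⧸ I, ((f : G → ℂ) q.out) • eW lamT q := by
  apply Subtype.ext
  funext y
  rw [show ((∑ q : G ⧸ I, ((f : G → ℂ) q.out) • eW lamT q : ↥(Wmod lamT)) : G → ℂ) y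
      = _ from sum_eW_apply lamT _ y]
  set q : G ⧸ I := (y : G ⧸ I) with hqdef
  have hmem : (q.out)⁻¹ * y ∈ I := (coset_iff _ _).mpr (out_coset_eq q)
  rw [eW_apply_self lamT q rfl]
  have := (mem_Wmod lamT).mp f.2 q.out ⟨_, hmem⟩
  rw [mul_inv_cancel_left] at this
  exact this.trans (mul_comm _ _)

theorem eW_eval_self (q : G ⧸ I) : (eW lamT q : G → ℂ) q.out = 1 := eFun_apply_one lamT q.out

/-- `W` is linearly equivalent to functions on the coset space. -/
noncomputable def WEquiv [Fintype (G ⧸ I)] : ↥(Wmod lamT) ≃ₗ[ℂ] ((G ⧸ I) → ℂ) where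
  toFun f := fun q => (f : G → ℂ) q.out
  map_add' := by intros; rfl
  map_smul' := by intros; rfl
  invFun g := ∑ q : G ⧸ I, g q • eW lamT q
  left_inv := by
    intro f
    exact (eW_spanning lamT f).symm
  right_inv := by
    intro g
    funext q
    show ((∑ q' : G ⧸ I, g q' • eW lamT q' : ↥(Wmod lamT)) : G → ℂ) q.out = g q
    rw [sum_eW_apply lamT g q.out, out_coset_eq q, eW_eval_self lamT q, mul_one]
  
theorem finrank_Wmod [Finite G] : Module.finrank ℂ ↥(Wmod lamT) = Nat.card (G ⧸ I) := by
  have : Fintype (G ⧸ I) := Fintype.ofFinite _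
  rw [(WEquiv lamT).finrank_eq, Module.finrank_pi, Nat.card_eq_fintype_card]

end Cliff
end


namespace Cliff

theorem charSum {A : Type*} [Group A] [Fintype A] (χ : A →* ℂˣ) (h : χ ≠ 1) :
    ∑ a : A, ((χ a : ℂˣ) : ℂ) = 0 := by
  obtain ⟨m, hm⟩ := DFunLike.ne_iff.mp h
  have hm' : ((χ m : ℂˣ) : ℂ) ≠ 1 := by
    intro hc
    exact hm (Units.ext hc)
  have key : ((χ m : ℂˣ) : ℂ) * ∑ a : A, ((χ a : ℂˣ) : ℂ) = ∑ a : A, ((χ a : ℂˣ) : ℂ) := by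
    rw [Finset.mul_sum]
    refine Fintype.sum_equiv (Equiv.mulLeft m) _ _ ?_
    intro a
    rw [Equiv.coe_mulLeft, map_mul]
    push_cast
    ring
  by_contra hs
  exact hm' (mul_right_cancel₀ hs (by rw [key, one_mul]))

variable {G : Type} [Group G] {N : Subgroup G} (hN : N.Normal) (lam : ↥N →* ℂˣ)
variable {H : Subgroup G} (hcompl : H.IsComplement' N)

theorem indRep_eigen (n : G) (hn : n ∈ N) (x : G) :
    indRep (lamT hN lam hcompl) n ⟨eFun (lamT hN lam hcompl) x, eFun_mem _ x⟩
      = ((conjChar N hN x lam ⟨n, hn⟩ : ℂˣ) : ℂ) •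
        (⟨eFun (lamT hN lam hcompl) x, eFun_mem _ x⟩ : ↥(Wmod (lamT hN lam hcompl))) := by
  set I := inertia hN lam
  set lamT' := lamT hN lam hcompl
  apply Subtype.ext
  funext y
  have hRHS : ((((conjChar N hN x lam ⟨n, hn⟩ : ℂˣ) : ℂ) •
      (⟨eFun lamT' x, eFun_mem _ x⟩ : ↥(Wmod lamT')) : ↥(Wmod lamT')) : G → ℂ) y
      = ((conjChar N hN x lam ⟨n, hn⟩ : ℂˣ) : ℂ) * eFun lamT' x y := rfl
  rw [hRHS]
  show eFun lamT' x (n⁻¹ * y) = _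
  have hmN : x⁻¹ * n⁻¹ * x ∈ N := hN.conj_mem' _ (N.inv_mem hn) x
  have hmI : x⁻¹ * n⁻¹ * x ∈ I := N_le_inertia hN lam hmN
  have hlamval : ((lam ⟨x⁻¹ * n⁻¹ * x, hmN⟩)⁻¹ : ℂˣ) = conjChar N hN x lam ⟨n, hn⟩ := by
    rw [← map_inv, conjChar_apply' hN lam x ⟨n, hn⟩ ⟨(x⁻¹ * n⁻¹ * x)⁻¹, N.inv_mem hmN⟩
      (by push_cast; group)]
    exact congrArg lam (by ext; simp)
  by_cases h : x⁻¹ * y ∈ I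
  · have h' : x⁻¹ * (n⁻¹ * y) ∈ I := by
      have : x⁻¹ * (n⁻¹ * y) = (x⁻¹ * n⁻¹ * x) * (x⁻¹ * y) := by group
      rw [this]
      exact I.mul_mem hmI h
    rw [eFun_apply_of_coset lamT' h', eFun_apply_of_coset lamT' h]
    have hsplit : (⟨x⁻¹ * (n⁻¹ * y), h'⟩ : ↥I) = ⟨x⁻¹ * n⁻¹ * x, hmI⟩ * ⟨x⁻¹ * y, h⟩ := by
      ext
      push_cast
      group
    rw [hsplit, map_mul, mul_inv]
    have hext : lamT' ⟨x⁻¹ * n⁻¹ * x, hmI⟩ = lam ⟨x⁻¹ * n⁻¹ * x, hmN⟩ :=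
      lamT_extends hN lam hcompl hmN
    rw [hext, hlamval]
    push_cast
    ring
  · have h' : ¬ (x⁻¹ * (n⁻¹ * y) ∈ I) := by
      intro hc
      apply h
      have : x⁻¹ * y = (x⁻¹ * n⁻¹ * x)⁻¹ * (x⁻¹ * (n⁻¹ * y)) := by group
      rw [this]
      exact I.mul_mem (I.inv_mem hmI) hc
    rw [eFun_apply_ne lamT' h', eFun_apply_ne lamT' h, mul_zero]

end Cliff


namespace Cliff

/-- The ratio of two characters. -/
def ratChar {A : Type*} [Group A] (f g : A →* ℂˣ) : A →* ℂˣ :=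
  MonoidHom.mk' (fun a => (f a)⁻¹ * g a) (by
    intro a b
    show (f (a * b))⁻¹ * g (a * b) = ((f a)⁻¹ * g a) * ((f b)⁻¹ * g b)
    rw [map_mul, map_mul, mul_inv]
    exact mul_mul_mul_comm _ _ _ _)

theorem ratChar_apply {A : Type*} [Group A] (f g : A →* ℂˣ) (a : A) :
    ratChar f g a = (f a)⁻¹ * g a := rfl

theorem ratChar_eq_one_iff {A : Type*} [Group A] (f g : A →* ℂˣ) :
    ratChar f g = 1 ↔ f = g := by
  constructor
  · intro h
    ext a
    have := DFunLike.congr_fun h a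
    rw [ratChar_apply] at this
    have h2 : (f a)⁻¹ * g a = 1 := this
    have := inv_mul_eq_one.mp h2
    exact congrArg Units.val this
  · intro h
    subst h
    ext a
    show (((f a)⁻¹ * f a : ℂˣ) : ℂ) = 1
    rw [inv_mul_cancel]
    rfl

variable {G : Type} [Group G] {N : Subgroup G} (hN : N.Normal) (lam : ↥N →* ℂˣ)
variable {H : Subgroup G} (hcompl : H.IsComplement' N)

theorem indRep_eigen' (n : ↥N) (q : G ⧸ inertia hN lam) :
    indRep (lamT hN lam hcompl) (n : G) (eW (lamT hN lam hcompl) q)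
      = ((conjChar N hN q.out lam n : ℂˣ) : ℂ) • eW (lamT hN lam hcompl) q := by
  have := indRep_eigen hN lam hcompl (n : G) n.2 q.out
  exact this

theorem invariant_eq_top [Finite G]
    (U : Submodule ℂ ↥(Wmod (lamT hN lam hcompl)))
    (hU : ∀ (g : G) (v : ↥(Wmod (lamT hN lam hcompl))), v ∈ U →
      indRep (lamT hN lam hcompl) g v ∈ U)
    (hne : U ≠ ⊥) : U = ⊤ := by
  classical
  letI : Fintype (G ⧸ inertia hN lam) := Fintype.ofFinite _
  letI : Fintype ↥N := Fintype.ofFinite _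
  -- moving basis vectors around
  have move : ∀ (q q' : G ⧸ inertia hN lam),
      eW (lamT hN lam hcompl) q ∈ U → eW (lamT hN lam hcompl) q' ∈ U := by
    intro q q' hq
    have h2 := hU (q'.out * q.out⁻¹) _ hq
    have h3 : indRep (lamT hN lam hcompl) (q'.out * q.out⁻¹) (eW (lamT hN lam hcompl) q)
        = eW (lamT hN lam hcompl) q' := by
      rw [show eW (lamT hN lam hcompl) q
          = ⟨eFun (lamT hN lam hcompl) q.out, eFun_mem _ _⟩ from rfl, indRep_eFun]
      apply Subtype.ext
      show eFun (lamT hN lam hcompl) (q'.out * q.out⁻¹ * q.out)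
          = eFun (lamT hN lam hcompl) q'.out
      rw [inv_mul_cancel_right]
    rwa [h3] at h2
  -- get a nonzero vector
  obtain ⟨u, huU, hune⟩ := (Submodule.ne_bot_iff U).mp hne
  -- get a nonzero coordinate
  have hcoord : ∃ q₀ : G ⧸ inertia hN lam, (u : G → ℂ) q₀.out ≠ 0 := by
    by_contra hall
    push_neg at hall
    apply hune
    rw [eW_spanning (lamT hN lam hcompl) u]
    apply Finset.sum_eq_zero
    intro q _
    rw [hall q, zero_smul]
  obtain ⟨q₀, hq₀⟩ := hcoord
  set x := q₀.out with hxdef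
  -- the projector onto the q₀ eigenline
  set P : ↥(Wmod (lamT hN lam hcompl)) →ₗ[ℂ] ↥(Wmod (lamT hN lam hcompl)) :=
    ∑ n : ↥N, (((conjChar N hN x lam n)⁻¹ : ℂˣ) : ℂ) • (indRep (lamT hN lam hcompl) (n : G))
    with hP
  have hPU : ∀ v ∈ U, P v ∈ U := by
    intro v hv
    rw [hP, LinearMap.sum_apply]
    exact Submodule.sum_mem U (fun n _ => by
      rw [LinearMap.smul_apply]
      exact U.smul_mem _ (hU _ _ hv))
  have hPe : ∀ q : G ⧸ inertia hN lam, P (eW (lamT hN lam hcompl) q)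
      = (if q = q₀ then ((Fintype.card ↥N : ℂ)) else 0) • eW (lamT hN lam hcompl) q := by
    intro q
    rw [hP, LinearMap.sum_apply]
    have hterm : ∀ n : ↥N,
        ((((conjChar N hN x lam n)⁻¹ : ℂˣ) : ℂ) • (indRep (lamT hN lam hcompl) (n : G)))
            (eW (lamT hN lam hcompl) q)
        = (((ratChar (conjChar N hN x lam) (conjChar N hN q.out lam)) n : ℂˣ) : ℂ)
            • eW (lamT hN lam hcompl) q := by
      intro n
      rw [LinearMap.smul_apply, indRep_eigen' hN lam hcompl n q, smul_smul, ratChar_apply]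
      push_cast
      ring_nf
    rw [Finset.sum_congr rfl (fun n _ => hterm n), ← Finset.sum_smul]
    congr 1
    by_cases hq : q = q₀
    · subst hq
      have hone : ratChar (conjChar N hN x lam) (conjChar N hN q.out lam) = 1 := by
        rw [ratChar_eq_one_iff, hxdef]
      rw [if_pos rfl, hone]
      simp
    · rw [if_neg hq]
      apply charSum
      intro hceq
      apply hq
      have h3 := (conjChar_eq_iff hN lam x q.out).mp ((ratChar_eq_one_iff _ _).mp hceq)
      rw [← out_coset_eq q, ← out_coset_eq q₀, ← hxdef]
      exact h3.symm
  -- P u is a nonzero multiple of eW q₀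
  have hPu : P u = (((Fintype.card ↥N : ℂ)) * (u : G → ℂ) x) • eW (lamT hN lam hcompl) q₀ := by
    have hspan := eW_spanning (lamT hN lam hcompl) u
    calc P u = P (∑ q : G ⧸ inertia hN lam,
          ((u : G → ℂ) q.out) • eW (lamT hN lam hcompl) q) := by rw [← hspan]
      _ = ∑ q : G ⧸ inertia hN lam, ((u : G → ℂ) q.out) • P (eW (lamT hN lam hcompl) q) := by
          rw [map_sum]
          exact Finset.sum_congr rfl (fun q _ => by rw [map_smul])
      _ = ∑ q : G ⧸ inertia hN lam, ((u : G → ℂ) q.out) •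
            ((if q = q₀ then ((Fintype.card ↥N : ℂ)) else 0) • eW (lamT hN lam hcompl) q) :=
          Finset.sum_congr rfl (fun q _ => by rw [hPe q])
      _ = (((Fintype.card ↥N : ℂ)) * (u : G → ℂ) x) • eW (lamT hN lam hcompl) q₀ := by
          rw [Finset.sum_eq_single q₀]
          · rw [if_pos rfl, smul_smul, mul_comm]
          · intro q _ hq
            rw [if_neg hq, zero_smul, smul_zero]
          · intro hc
            exact absurd (Finset.mem_univ q₀) hc
  have heW : eW (lamT hN lam hcompl) q₀ ∈ U := by
    have hc0 : (((Fintype.card ↥N : ℂ)) * (u : G → ℂ) x) ≠ 0 := by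
      apply mul_ne_zero _ hq₀
      exact_mod_cast Fintype.card_ne_zero
    have hmem := hPU u huU
    rw [hPu] at hmem
    have h2 := U.smul_mem ((((Fintype.card ↥N : ℂ)) * (u : G → ℂ) x)⁻¹) hmem
    rwa [smul_smul, inv_mul_cancel₀ hc0, one_smul] at h2
  -- conclude
  rw [Submodule.eq_top_iff']
  intro f
  rw [eW_spanning (lamT hN lam hcompl) f]
  exact Submodule.sum_mem U (fun q _ => U.smul_mem _ (move q₀ q heW))

end Cliff


namespace Cliff

variable {G : Type} [Group G]

/-- Monomorphisms of `FDRep`s have injective underlying maps. -/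
theorem mono_injective {Y V : FDRep ℂ G} (f : Y ⟶ V) [Mono f] :
    Function.Injective (f.hom.hom.hom : Y →ₗ[ℂ] V) := by
  rw [← LinearMap.ker_eq_bot]
  by_contra hne
  set K := LinearMap.ker (f.hom.hom.hom : Y →ₗ[ℂ] V) with hK
  have hmapsTo : ∀ (g : G) (v : Y), v ∈ K → Y.ρ g v ∈ K := by
    intro g v hv
    have hc : f.hom.hom.hom (Y.ρ g v) = V.ρ g (f.hom.hom.hom v) :=
      congrArg (fun (m : Y.V ⟶ V.V) => m.hom.hom v) (f.comm g)
    have hv0 : f.hom.hom.hom v = 0 := hv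
    show f.hom.hom.hom (Y.ρ g v) = 0
    rw [hc, hv0, map_zero]
  letI ρK : Representation ℂ G ↥K :=
    { toFun := fun g => (Y.ρ g).restrict (fun v hv => hmapsTo g v hv)
      map_one' := by
        ext v
        show Y.ρ 1 v.1 = v.1
        rw [map_one]
        rfl
      map_mul' := by
        intro g g'
        ext v
        show Y.ρ (g * g') v.1 = Y.ρ g (Y.ρ g' v.1)
        rw [map_mul]
        rfl }
  let Z : FDRep ℂ G := FDRep.of ρK
  let ι : Z ⟶ Y := { hom := FGModuleCat.ofHom K.subtype, comm := fun g => rfl }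
  have hcomp : ι ≫ f = 0 ≫ f := by
    apply Action.hom_ext
    rw [Action.comp_hom, Action.comp_hom, Action.zero_hom, Limits.zero_comp]
    ext v
    show f.hom.hom.hom v.1 = 0
    exact v.2
  have hzero : ι = 0 := (cancel_mono f).mp hcomp
  obtain ⟨v, hvK, hvne⟩ := (Submodule.ne_bot_iff K).mp hne
  apply hvne
  have : ι.hom.hom.hom ⟨v, hvK⟩ = v := rfl
  rw [hzero, Action.zero_hom] at this
  exact this.symm

/-- A bijective morphism of `FDRep`s is an isomorphism. -/
theorem isIso_of_bijective {Y V : FDRep ℂ G} (f : Y ⟶ V)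
    (hbij : Function.Bijective (f.hom.hom.hom : Y →ₗ[ℂ] V)) : IsIso f := by
  let e : Y ≃ₗ[ℂ] V := LinearEquiv.ofBijective f.hom.hom.hom hbij
  have he : ∀ y : Y, e y = f.hom.hom.hom y := fun y => rfl
  let finv : V ⟶ Y :=
    { hom := FGModuleCat.ofHom (e.symm : V →ₗ[ℂ] Y)
      comm := by
        intro g
        ext w
        apply hbij.1
        show f.hom.hom.hom (e.symm (V.ρ g w)) = f.hom.hom.hom (Y.ρ g (e.symm w))
        have h1 : f.hom.hom.hom (e.symm (V.ρ g w)) = V.ρ g w := by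
          rw [← he, e.apply_symm_apply]
        have h2 : f.hom.hom.hom (Y.ρ g (e.symm w)) = V.ρ g (f.hom.hom.hom (e.symm w)) :=
          congrArg (fun (m : Y.V ⟶ V.V) => m.hom.hom (e.symm w)) (f.comm g)
        rw [h1, h2, ← he, e.apply_symm_apply] }
  refine ⟨finv, ?_, ?_⟩
  · apply Action.hom_ext
    ext y
    show e.symm (f.hom.hom.hom y) = y
    rw [← he, e.symm_apply_apply]
  · apply Action.hom_ext
    ext w
    show f.hom.hom.hom (e.symm w) = w
    rw [← he, e.apply_symm_apply]

variable [Finite G] {N : Subgroup G} (hN : N.Normal) (lam : ↥N →* ℂˣ)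
variable {H : Subgroup G} (hcompl : H.IsComplement' N)

/-- The induced representation, as an `FDRep`. -/
noncomputable def indFDRep : FDRep ℂ G := FDRep.of (indRep (lamT hN lam hcompl))

theorem indFDRep_ρ (g : G) :
    (indFDRep hN lam hcompl).ρ g = indRep (lamT hN lam hcompl) g := rfl

theorem finrank_indFDRep :
    Module.finrank ℂ (indFDRep hN lam hcompl) = Nat.card (G ⧸ inertia hN lam) :=
  finrank_Wmod _

theorem simple_indFDRep : Simple (indFDRep hN lam hcompl) := by
  constructor
  intro Y f hmono
  constructor
  · intro hiso hf0
    obtain ⟨ginv, hg1, hg2⟩ := hiso.out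
    rw [hf0, Limits.comp_zero] at hg2
    have h3 : 𝟙 (indFDRep hN lam hcompl) = (0 : _ ⟶ _) := hg2.symm
    have h1 : eW (lamT hN lam hcompl) ((1 : G) : G ⧸ inertia hN lam) ≠ 0 := by
      intro hc
      have := eW_eval_self (lamT hN lam hcompl) ((1 : G) : G ⧸ inertia hN lam)
      rw [hc] at this
      simp at this
    exact h1 (congrArg (fun (m : (indFDRep hN lam hcompl) ⟶ (indFDRep hN lam hcompl)) =>
      m.hom.hom.hom (eW (lamT hN lam hcompl) ((1 : G) : G ⧸ inertia hN lam))) h3)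
  · intro hf0
    apply isIso_of_bijective
    constructor
    · exact mono_injective f
    · -- surjectivity via the invariant submodule theorem
      rw [← LinearMap.range_eq_top]
      apply invariant_eq_top hN lam hcompl
      · rintro g v ⟨y, rfl⟩
        refine ⟨Y.ρ g y, ?_⟩
        have hc : f.hom.hom.hom (Y.ρ g y) = (indFDRep hN lam hcompl).ρ g (f.hom.hom.hom y) :=
          congrArg (fun (m : Y.V ⟶ (indFDRep hN lam hcompl).V) => m.hom.hom y) (f.comm g)
        exact hc
      · intro hc
        exact hf0 (Action.hom_ext _ _ (FGModuleCat.hom_ext (LinearMap.range_eq_bot.mp hc)))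

end Cliff


namespace Cliff

variable {G : Type} [Group G] [Finite G] {N : Subgroup G} (hN : N.Normal) (lam : ↥N →* ℂˣ)
variable {H : Subgroup G} (hcompl : H.IsComplement' N)

theorem charKer_indFDRep_eq_bot
    (hmin : ∀ M : Subgroup G, M.Normal → M ≠ ⊥ → N ≤ M) (hlam : lam ≠ 1) :
    charKer (indFDRep hN lam hcompl) = ⊥ := by
  by_contra hne
  have hNK : N ≤ charKer (indFDRep hN lam hcompl) := by
    apply hmin _ _ hne
    show (MonoidHom.ker (Representation.asGroupHom (indFDRep hN lam hcompl).ρ)).Normal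
    infer_instance
  obtain ⟨n₀, hn₀⟩ := DFunLike.ne_iff.mp hlam
  have hn₀K : (n₀ : G) ∈ charKer (indFDRep hN lam hcompl) := hNK n₀.2
  have hrho : (indFDRep hN lam hcompl).ρ (n₀ : G) = 1 := by
    have h1 : Representation.asGroupHom (indFDRep hN lam hcompl).ρ (n₀ : G) = 1 := hn₀K
    have h2 := congrArg (Units.val) h1
    rwa [Representation.asGroupHom_apply] at h2
  set q : G ⧸ inertia hN lam := ((1 : G) : G ⧸ inertia hN lam) with hqdef
  have houtI : q.out ∈ inertia hN lam := by
    have h3 : (1 : G)⁻¹ * q.out ∈ inertia hN lam := by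
      rw [coset_iff]
      exact (out_coset_eq q).symm
    rwa [inv_one, one_mul] at h3
  have heig := indRep_eigen' hN lam hcompl ⟨(n₀ : G), n₀.2⟩ q
  rw [show conjChar N hN q.out lam = lam from (mem_inertia hN lam).mp houtI] at heig
  have hid : indRep (lamT hN lam hcompl) ((n₀ : G)) (eW (lamT hN lam hcompl) q)
      = eW (lamT hN lam hcompl) q := by
    rw [show indRep (lamT hN lam hcompl) ((n₀ : G)) = (indFDRep hN lam hcompl).ρ (n₀ : G)
      from rfl, hrho]
    rfl
  rw [hid] at heig
  have hc1 : ((lam ⟨(n₀ : G), n₀.2⟩ : ℂˣ) : ℂ) = 1 := by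
    have h4 := congrArg (fun (w : ↥(Wmod (lamT hN lam hcompl))) => (w : G → ℂ) q.out) heig
    have h5 : (eW (lamT hN lam hcompl) q : G → ℂ) q.out
        = ((lam ⟨(n₀ : G), n₀.2⟩ : ℂˣ) : ℂ) * (eW (lamT hN lam hcompl) q : G → ℂ) q.out := h4
    rw [eW_eval_self, mul_one] at h5
    exact h5.symm
  apply hn₀
  rw [show (1 : ↥N →* ℂˣ) n₀ = 1 from rfl]
  apply Units.ext
  rw [show (⟨(n₀ : G), n₀.2⟩ : ↥N) = n₀ from rfl] at hc1
  exact hc1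

end Cliff

theorem stmt_19 {G : Type} [Group G] [Finite G] (hsol : IsSolvable G)
    (N : Subgroup G) (hN : N.Normal) (hmin : IsUniqueMinimalNormal N)
    (hfrattini : frattini G = ⊥)
    (H : Subgroup G) (hmax : IsCoatom H) (hcompl : H.IsComplement' N) :
    (∀ lam : ↥N →* ℂˣ, lam ≠ 1 →
      ∃ χ : FDRep ℂ G, Simple χ ∧ charKer χ = ⊥ ∧
        Module.finrank ℂ χ =
          Set.ncard {μ : ↥N →* ℂˣ | ∃ h ∈ H, μ = conjChar N hN h lam}) ∧
    Set.ncard {s : ℕ | ∃ lam : ↥N →* ℂˣ, lam ≠ 1 ∧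
        s = Set.ncard {μ : ↥N →* ℂˣ | ∃ h ∈ H, μ = conjChar N hN h lam}} ≤
      (codSet G).ncard := by
  classical
  have hGpos : Nat.card G ≠ 0 := Nat.card_ne_zero.mpr ⟨⟨1⟩, inferInstance⟩
  constructor
  · intro lam hlam
    refine ⟨Cliff.indFDRep hN lam hcompl, Cliff.simple_indFDRep hN lam hcompl,
      Cliff.charKer_indFDRep_eq_bot hN lam hcompl hmin.2.2 hlam, ?_⟩
    rw [Cliff.finrank_indFDRep, Cliff.ncard_orbitSet hN lam hcompl]
  · have key : ∀ s ∈ {s : ℕ | ∃ lam : ↥N →* ℂˣ, lam ≠ 1 ∧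
        s = Set.ncard {μ : ↥N →* ℂˣ | ∃ h ∈ H, μ = conjChar N hN h lam}},
        s ∣ Nat.card G ∧ Nat.card G / s ∈ codSet G := by
      rintro s ⟨lam, hlam, rfl⟩
      rw [Cliff.ncard_orbitSet hN lam hcompl]
      constructor
      · exact Subgroup.index_dvd_card (Cliff.inertia hN lam)
      · refine ⟨Cliff.indFDRep hN lam hcompl, Cliff.simple_indFDRep hN lam hcompl, ?_⟩
        unfold codeg
        rw [Cliff.charKer_indFDRep_eq_bot hN lam hcompl hmin.2.2 hlam, Subgroup.index_bot,
          Cliff.finrank_indFDRep]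
    have hinj : Set.InjOn (fun s => Nat.card G / s) {s : ℕ | ∃ lam : ↥N →* ℂˣ, lam ≠ 1 ∧
        s = Set.ncard {μ : ↥N →* ℂˣ | ∃ h ∈ H, μ = conjChar N hN h lam}} := by
      intro a ha b hb hab
      simp only at hab
      have hda := (key a ha).1
      have hdb := (key b hb).1
      have h1 : a = Nat.card G / (Nat.card G / a) := (Nat.div_div_self hda hGpos).symm
      rw [h1, hab, Nat.div_div_self hdb hGpos]
    have himg : (fun s => Nat.card G / s) '' {s : ℕ | ∃ lam : ↥N →* ℂˣ, lam ≠ 1 ∧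
        s = Set.ncard {μ : ↥N →* ℂˣ | ∃ h ∈ H, μ = conjChar N hN h lam}} ⊆ codSet G := by
      rintro _ ⟨s, hs, rfl⟩
      exact (key s hs).2
    have hfin : (codSet G).Finite := by
      apply (Set.finite_Iic (Nat.card G)).subset
      rintro n ⟨V, hV, rfl⟩
      calc codeg V ≤ (charKer V).index := Nat.div_le_self _ _
        _ ≤ Nat.card G :=
          Nat.le_of_dvd (Nat.pos_of_ne_zero hGpos) (Subgroup.index_dvd_card _)
    calc Set.ncard {s : ℕ | ∃ lam : ↥N →* ℂˣ, lam ≠ 1 ∧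
        s = Set.ncard {μ : ↥N →* ℂˣ | ∃ h ∈ H, μ = conjChar N hN h lam}}
        = Set.ncard ((fun s => Nat.card G / s) '' {s : ℕ | ∃ lam : ↥N →* ℂˣ, lam ≠ 1 ∧
            s = Set.ncard {μ : ↥N →* ℂˣ | ∃ h ∈ H, μ = conjChar N hN h lam}}) :=
          (Set.ncard_image_of_injOn hinj).symm
      _ ≤ (codSet G).ncard := Set.ncard_le_ncard himg hfin
end
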